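/- arXiv:2506.15360 — 4 statements merged into one kernel-verified Lean document; each statement's English description precedes it below -/
import Mathlib

section
/- For every index p ∈ {1,…,d}, E[ (uᵀAu · u_p)² ] = (tr(A))² + 4·A_{p,p}·tr(A) + 2·Σ_{i=1}^d A_{i,i}² + 8·A_{p,p}² + Σ_{i>j} (A_{i,j} + A_{j,i})² + 2·Σ_{i : i>p} (A_{i,p} + A_{p,i})² + 2·Σ_{j : j<p} (A_{p,j} + A_{j,p})², where Σ_{i>j} ranges over all pairs (i,j) with 1 ≤ j < i ≤ d. -/
open MeasureTheory ProbabilityTheory Finset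

noncomputable def stdGaussianVec (d : ℕ) : Measure (Fin d → ℝ) :=
  Measure.pi fun _ => gaussianReal 0 1

def quadForm {d : ℕ} (A : Matrix (Fin d) (Fin d) ℝ) (u : Fin d → ℝ) : ℝ :=
  ∑ i, ∑ j, A i j * u i * u j

set_option maxRecDepth 10000
set_option maxHeartbeats 2000000

open Real
open scoped ENNReal NNReal

section Helpers


lemma intJ (n : ℕ) : Integrable (fun x : ℝ => x ^ n * Real.exp (-(1/2) * x ^ 2)) := by
  have h := (integrable_rpow_mul_exp_neg_mul_sq (b := 1/2) (by norm_num) (s := n)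
    (lt_of_lt_of_le (by norm_num) (Nat.cast_nonneg n))).abs
  refine h.mono' (Continuous.aestronglyMeasurable (by continuity)) ?_
  filter_upwards with x
  simp [Real.rpow_natCast, abs_mul, abs_pow, Real.abs_exp, norm_mul, abs_of_nonneg (Real.exp_nonneg _)]

noncomputable def J (n : ℕ) : ℝ := ∫ x : ℝ, x ^ n * Real.exp (-(1/2) * x ^ 2)

lemma J0 : J 0 = Real.sqrt (2 * π) := by
  simp only [J, pow_zero, one_mul]
  rw [integral_gaussian, show π / (1/2 : ℝ) = 2 * π by ring]

lemma J1 : J 1 = 0 := by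
  have hderiv : ∀ x : ℝ, HasDerivAt (fun y : ℝ => -Real.exp (-(1/2) * y ^ 2))
      (x ^ 1 * Real.exp (-(1/2) * x ^ 2)) x := by
    intro x
    have h1 : HasDerivAt (fun y : ℝ => -(1/2) * y ^ 2) (-(1/2) * (2 * x)) x := by
      simpa using ((hasDerivAt_pow 2 x).const_mul (-(1/2) : ℝ))
    have := (h1.exp).neg
    refine HasDerivAt.congr_deriv this ?_
    ring
  have := integral_eq_zero_of_hasDerivAt_of_integrable hderiv (intJ 1)
    ((integrable_exp_neg_mul_sq (by norm_num : (0:ℝ) < 1/2)).neg)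
  simpa [J] using this

lemma Jrec (n : ℕ) : J (n + 2) = (n + 1) * J n := by
  have hderiv : ∀ x : ℝ, HasDerivAt (fun y : ℝ => y ^ (n+1) * Real.exp (-(1/2) * y ^ 2))
      ((n+1) * x ^ n * Real.exp (-(1/2) * x ^ 2) - x ^ (n+2) * Real.exp (-(1/2) * x ^ 2)) x := by
    intro x
    have h1 : HasDerivAt (fun y : ℝ => y ^ (n+1)) ((n+1) * x ^ n) x := by
      simpa using hasDerivAt_pow (n+1) x
    have h2 : HasDerivAt (fun y : ℝ => Real.exp (-(1/2) * y ^ 2))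
        (-x * Real.exp (-(1/2) * x ^ 2)) x := by
      have : HasDerivAt (fun y : ℝ => -(1/2) * y ^ 2) (-(1/2) * (2 * x)) x := by
        simpa using ((hasDerivAt_pow 2 x).const_mul (-(1/2) : ℝ))
      convert this.exp using 1
      ring
    refine HasDerivAt.congr_deriv (h1.mul h2) ?_
    ring
  have hint : Integrable (fun x : ℝ => (n+1) * x ^ n * Real.exp (-(1/2) * x ^ 2)
      - x ^ (n+2) * Real.exp (-(1/2) * x ^ 2)) := by
    apply Integrable.sub
    · simpa [mul_assoc] using (intJ n).const_mul ((n:ℝ)+1)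
    · exact intJ (n+2)
  have h0 := integral_eq_zero_of_hasDerivAt_of_integrable hderiv hint (intJ (n+1))
  rw [integral_sub (by simpa [mul_assoc] using (intJ n).const_mul ((n:ℝ)+1)) (intJ (n+2))] at h0
  have : ∫ x : ℝ, (n+1) * x ^ n * Real.exp (-(1/2) * x ^ 2)
      = (n+1) * J n := by
    simp_rw [mul_assoc]
    rw [integral_const_mul]
    rfl
  rw [this] at h0
  have hJ : J (n+2) = ∫ a : ℝ, a ^ (n+2) * Real.exp (-(1/2) * a ^ 2) := rfl
  linarith

lemma gaussianReal_eq : gaussianReal 0 1 =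
    volume.withDensity (fun x => ((gaussianPDFReal 0 1 x).toNNReal : ℝ≥0∞)) := by
  rw [gaussianReal_of_var_ne_zero 0 one_ne_zero]
  rfl

lemma pdfreal_eq (x : ℝ) : gaussianPDFReal 0 1 x
    = (Real.sqrt (2 * π))⁻¹ * Real.exp (-(1/2) * x ^ 2) := by
  rw [gaussianPDFReal]
  norm_num
  left; ring

lemma integral_gaussianReal_eq (g : ℝ → ℝ) :
    ∫ x, g x ∂(gaussianReal 0 1)
      = (Real.sqrt (2 * π))⁻¹ * ∫ x, g x * Real.exp (-(1/2) * x ^ 2) := by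
  rw [gaussianReal_eq, integral_withDensity_eq_integral_smul
    (by exact (measurable_gaussianPDFReal 0 1).real_toNNReal) g]
  rw [← integral_const_mul]
  congr 1 with x
  simp [pdfreal_eq, NNReal.smul_def, Real.toNNReal_of_nonneg (by positivity : (0:ℝ) ≤ (Real.sqrt (2 * π))⁻¹ * Real.exp (-(1/2) * x ^ 2))]
  rw [sup_eq_left.mpr (by positivity)]
  ring

noncomputable def mom (n : ℕ) : ℝ := ∫ x, x ^ n ∂(gaussianReal 0 1)

lemma mom_eq (n : ℕ) : mom n = (Real.sqrt (2 * π))⁻¹ * J n :=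
  integral_gaussianReal_eq (fun x => x ^ n)

lemma sqrt2pi_pos : 0 < Real.sqrt (2 * π) := Real.sqrt_pos.mpr (by positivity)

lemma mom0 : mom 0 = 1 := by
  rw [mom_eq, J0]; field_simp
lemma mom1 : mom 1 = 0 := by rw [mom_eq, J1]; ring
lemma momrec (n : ℕ) : mom (n + 2) = (n + 1) * mom n := by
  rw [mom_eq, mom_eq, Jrec]; ring
lemma mom2 : mom 2 = 1 := by rw [show 2 = 0 + 2 from rfl, momrec, mom0]; norm_num
lemma mom3 : mom 3 = 0 := by rw [show 3 = 1 + 2 from rfl, momrec, mom1]; ring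
lemma mom4 : mom 4 = 3 := by rw [show 4 = 2 + 2 from rfl, momrec, mom2]; norm_num
lemma mom5 : mom 5 = 0 := by rw [show 5 = 3 + 2 from rfl, momrec, mom3]; ring
lemma mom6 : mom 6 = 15 := by rw [show 6 = 4 + 2 from rfl, momrec, mom4]; norm_num

lemma integrable_pow_gaussian (n : ℕ) :
    Integrable (fun x : ℝ => x ^ n) (gaussianReal 0 1) := by
  rw [gaussianReal_eq]
  rw [integrable_withDensity_iff_integrable_smul
    (by exact (measurable_gaussianPDFReal 0 1).real_toNNReal)]
  apply ((intJ n).const_mul ((Real.sqrt (2 * π))⁻¹)).congr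
  filter_upwards with x
  simp [pdfreal_eq, NNReal.smul_def, Real.toNNReal_of_nonneg (by positivity : (0:ℝ) ≤ (Real.sqrt (2 * π))⁻¹ * Real.exp (-(1/2) * x ^ 2))]
  rw [sup_eq_left.mpr (by positivity)]
  ring

lemma integral_pi_prod {d : ℕ} (f : Fin d → ℝ → ℝ) :
    ∫ u, ∏ m, f m (u m) ∂(stdGaussianVec d)
      = ∏ m, ∫ x, f m x ∂(gaussianReal 0 1) := by
  letI : MeasureSpace ℝ := ⟨gaussianReal 0 1⟩
  haveI : SigmaFinite (volume : Measure ℝ) := (inferInstance : SigmaFinite (gaussianReal 0 1))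
  exact MeasureTheory.integral_fintype_prod_eq_prod (μ := fun _ => gaussianReal 0 1) f

lemma integrable_pi_prod {d : ℕ} (f : Fin d → ℝ → ℝ)
    (hf : ∀ m, Integrable (f m) (gaussianReal 0 1)) :
    Integrable (fun u => ∏ m, f m (u m)) (stdGaussianVec d) := by
  letI : MeasureSpace ℝ := ⟨gaussianReal 0 1⟩
  haveI : SigmaFinite (volume : Measure ℝ) := (inferInstance : SigmaFinite (gaussianReal 0 1))
  exact MeasureTheory.Integrable.fintype_prod hf

lemma integral_pi_pow {d : ℕ} (c : Fin d → ℕ) :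
    ∫ u, ∏ m, (u m) ^ (c m) ∂(stdGaussianVec d) = ∏ m, mom (c m) :=
  integral_pi_prod (fun m x => x ^ (c m))

lemma integrable_pi_pow {d : ℕ} (c : Fin d → ℕ) :
    Integrable (fun u => ∏ m, (u m) ^ (c m)) (stdGaussianVec d) :=
  integrable_pi_prod _ (fun m => integrable_pow_gaussian (c m))

def cnt {d : ℕ} (i j k l p m : Fin d) : ℕ :=
  (if i = m then 1 else 0) + (if j = m then 1 else 0) + (if k = m then 1 else 0)
    + (if l = m then 1 else 0) + (if p = m then 2 else 0)

lemma prod_pow_ite {d : ℕ} (u : Fin d → ℝ) (a : Fin d) (n : ℕ) :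
    ∏ m, (u m) ^ (if a = m then n else 0) = u a ^ n := by
  rw [Finset.prod_eq_single_of_mem a (Finset.mem_univ a)]
  · simp
  · intro b _ hb
    simp [Ne.symm hb]

lemma monomial_eq {d : ℕ} (i j k l p : Fin d) (u : Fin d → ℝ) :
    u i * u j * u k * u l * (u p) ^ 2 = ∏ m, (u m) ^ (cnt i j k l p m) := by
  simp only [cnt, pow_add, Finset.prod_mul_distrib, prod_pow_ite]
  ring

lemma prod_mom_support {d : ℕ} (c : Fin d → ℕ) (s : Finset (Fin d))
    (h : ∀ m ∉ s, c m = 0) :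
    ∏ m, mom (c m) = ∏ m ∈ s, mom (c m) :=
  (Finset.prod_subset (Finset.subset_univ s) (fun m _ hm => by rw [h m hm, mom0])).symm

lemma wickval {d : ℕ} (i j k l p : Fin d) :
    ∏ m, mom (cnt i j k l p m)
    = (if i = j then (1:ℝ) else 0) * (if k = l then 1 else 0)
      + (if i = k then (1:ℝ) else 0) * (if j = l then 1 else 0)
      + (if i = l then (1:ℝ) else 0) * (if j = k then 1 else 0)
      + 2 * ((if i = j then (1:ℝ) else 0) * (if k = p then 1 else 0) * (if l = p then 1 else 0)
        + (if i = k then (1:ℝ) else 0) * (if j = p then 1 else 0) * (if l = p then 1 else 0)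
        + (if i = l then (1:ℝ) else 0) * (if j = p then 1 else 0) * (if k = p then 1 else 0)
        + (if i = p then (1:ℝ) else 0) * (if j = k then 1 else 0) * (if l = p then 1 else 0)
        + (if i = p then (1:ℝ) else 0) * (if j = l then 1 else 0) * (if k = p then 1 else 0)
        + (if i = p then (1:ℝ) else 0) * (if j = p then 1 else 0) * (if k = l then 1 else 0)) := by
  rw [prod_mom_support _ ({i, j, k, l, p} : Finset (Fin d)) (fun m hm => by
    simp only [Finset.mem_insert, Finset.mem_singleton, not_or] at hm
    simp [cnt, Ne.symm hm.1, Ne.symm hm.2.1, Ne.symm hm.2.2.1, Ne.symm hm.2.2.2.1,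
      Ne.symm hm.2.2.2.2])]
  obtain hij | hij := eq_or_ne i j <;>
  obtain hik | hik := eq_or_ne i k <;>
  obtain hil | hil := eq_or_ne i l <;>
  obtain hip | hip := eq_or_ne i p <;>
  obtain hjk | hjk := eq_or_ne j k <;>
  obtain hjl | hjl := eq_or_ne j l <;>
  obtain hjp | hjp := eq_or_ne j p <;>
  obtain hkl | hkl := eq_or_ne k l <;>
  obtain hkp | hkp := eq_or_ne k p <;>
  obtain hlp | hlp := eq_or_ne l p <;>
  simp_all [cnt, eq_comm, Finset.prod_insert, Finset.mem_insert, Finset.mem_singleton,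
    Finset.insert_idem, mom0, mom1, mom2, mom3, mom4, mom5, mom6] <;>
  norm_num

lemma offdiag_split {d : ℕ} (f : Fin d → Fin d → ℝ) :
    ∑ i, ∑ j, f i j
      = ∑ i, f i i + ∑ i, ∑ j ∈ Finset.univ.filter (fun j => j < i), (f i j + f j i) := by
  have h1 : ∀ i : Fin d, ∑ j, f i j
      = f i i + (∑ j ∈ Finset.univ.filter (fun j => j < i), f i j
        + ∑ j ∈ Finset.univ.filter (fun j => i < j), f i j) := by
    intro i
    rw [← Finset.add_sum_erase _ _ (Finset.mem_univ i)]
    congr 1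
    rw [← Finset.sum_filter_add_sum_filter_not (Finset.univ.erase i) (fun j => j < i)]
    congr 1
    · apply Finset.sum_congr _ (fun _ _ => rfl)
      ext x
      simp only [Finset.mem_filter, Finset.mem_erase, Finset.mem_univ, and_true, true_and]
      exact ⟨fun h => h.2, fun h => ⟨ne_of_lt h, h⟩⟩
    · apply Finset.sum_congr _ (fun _ _ => rfl)
      ext x
      simp only [Finset.mem_filter, Finset.mem_erase, Finset.mem_univ, and_true, true_and]
      constructor
      · rintro ⟨hne, hnlt⟩
        exact ((Ne.lt_or_gt hne)).resolve_left hnlt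
      · intro h
        exact ⟨ne_of_gt h, not_lt_of_gt h⟩
  simp_rw [h1]
  rw [Finset.sum_add_distrib, Finset.sum_add_distrib]
  have h2 : ∑ i : Fin d, ∑ j ∈ Finset.univ.filter (fun j => i < j), f i j
      = ∑ i : Fin d, ∑ j ∈ Finset.univ.filter (fun j => j < i), f j i := by
    rw [Finset.sum_comm' (t' := Finset.univ) (s' := fun y => Finset.univ.filter (fun x => x < y))]
    intro x y
    simp
  rw [h2, ← Finset.sum_add_distrib]
  simp_rw [Finset.sum_add_distrib]

lemma single_split {d : ℕ} (g : Fin d → ℝ) (p : Fin d) :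
    ∑ i, g i = g p + ∑ i ∈ Finset.univ.filter (fun i => i < p), g i
      + ∑ i ∈ Finset.univ.filter (fun i => p < i), g i := by
  rw [← Finset.add_sum_erase _ _ (Finset.mem_univ p), add_assoc]
  congr 1
  rw [← Finset.sum_filter_add_sum_filter_not (Finset.univ.erase p) (fun i => i < p)]
  congr 1
  · apply Finset.sum_congr _ (fun _ _ => rfl)
    ext x
    simp only [Finset.mem_filter, Finset.mem_erase, Finset.mem_univ, and_true, true_and]
    exact ⟨fun h => h.2, fun h => ⟨ne_of_lt h, h⟩⟩
  · apply Finset.sum_congr _ (fun _ _ => rfl)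
    ext x
    simp only [Finset.mem_filter, Finset.mem_erase, Finset.mem_univ, and_true, true_and]
    constructor
    · rintro ⟨hne, hnlt⟩
      exact ((Ne.lt_or_gt hne)).resolve_left hnlt
    · intro h
      exact ⟨ne_of_gt h, not_lt_of_gt h⟩

end Helpers

theorem second_moment_quadForm_up {d : ℕ} (hd : 1 ≤ d)
    (A : Matrix (Fin d) (Fin d) ℝ) (p : Fin d) :
    ∫ u, (quadForm A u * u p) ^ 2 ∂(stdGaussianVec d)
      = (∑ i, A i i) ^ 2 + 4 * A p p * (∑ i, A i i)
        + 2 * (∑ i, (A i i) ^ 2) + 8 * (A p p) ^ 2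
        + (∑ i, ∑ j ∈ Finset.univ.filter (fun j => j < i), (A i j + A j i) ^ 2)
        + 2 * (∑ i ∈ Finset.univ.filter (fun i => p < i), (A i p + A p i) ^ 2)
        + 2 * (∑ j ∈ Finset.univ.filter (fun j => j < p), (A p j + A j p) ^ 2) := by
  classical
  have expand : (fun u : Fin d → ℝ => (quadForm A u * u p) ^ 2)
      = fun u => ∑ q : Fin d × Fin d × Fin d × Fin d,
          A q.1 q.2.1 * A q.2.2.1 q.2.2.2
            * ∏ m, (u m) ^ (cnt q.1 q.2.1 q.2.2.1 q.2.2.2 p m) := by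
    funext u
    calc (quadForm A u * u p) ^ 2
        = ∑ i, ∑ j, ∑ k, ∑ l, A i j * A k l * (u i * u j * u k * u l * (u p) ^ 2) := by
          simp only [quadForm, pow_two, Finset.sum_mul, Finset.mul_sum]
          exact Finset.sum_congr rfl fun i _ => Finset.sum_congr rfl fun j _ =>
            Finset.sum_congr rfl fun k _ => Finset.sum_congr rfl fun l _ => by ring
      _ = ∑ i, ∑ j, ∑ k, ∑ l, A i j * A k l * ∏ m, (u m) ^ (cnt i j k l p m) := by
          simp_rw [monomial_eq]
      _ = ∑ q : Fin d × Fin d × Fin d × Fin d,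
            A q.1 q.2.1 * A q.2.2.1 q.2.2.2
              * ∏ m, (u m) ^ (cnt q.1 q.2.1 q.2.2.1 q.2.2.2 p m) := by
          rw [Fintype.sum_prod_type]
          exact Finset.sum_congr rfl fun i _ => by
            rw [Fintype.sum_prod_type]
            exact Finset.sum_congr rfl fun j _ => by rw [Fintype.sum_prod_type]
  rw [expand, integral_finset_sum _
    (fun q _ => (integrable_pi_pow (cnt q.1 q.2.1 q.2.2.1 q.2.2.2 p)).const_mul _)]
  simp_rw [MeasureTheory.integral_const_mul, integral_pi_pow, wickval]
  rw [Fintype.sum_prod_type]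
  simp_rw [Fintype.sum_prod_type]
  trans ((∑ i, A i i) ^ 2 + 4 * A p p * (∑ i, A i i)
        + (∑ i, ∑ j, (A i j * A i j + A i j * A j i))
        + 2 * (∑ i, (A i p + A p i) * (A i p + A p i)))
  · simp only [mul_add, mul_ite, ite_mul, mul_zero, zero_mul, mul_one, one_mul,
      Finset.sum_add_distrib, Finset.sum_ite_eq, Finset.sum_ite_eq', Finset.mem_univ, if_true,
      Finset.sum_ite_irrel, Finset.sum_const_zero, ite_self]
    rw [pow_two, Finset.sum_mul_sum]
    have e1 : (4:ℝ) * A p p * ∑ i, A i i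
        = (∑ x, A x x * A p p * 2) + ∑ x, A p p * A x x * 2 := by
      rw [mul_assoc, Finset.mul_sum, ← Finset.sum_add_distrib, Finset.mul_sum]
      exact Finset.sum_congr rfl fun x _ => by ring
    have e2 : (2:ℝ) * ∑ x, (A x p + A p x) * A x p
        = (∑ x, A x p * A x p * 2) + ∑ x, A p x * A x p * 2 := by
      rw [Finset.mul_sum, ← Finset.sum_add_distrib]
      exact Finset.sum_congr rfl fun x _ => by ring
    have e3 : (2:ℝ) * ∑ x, (A x p + A p x) * A p x
        = (∑ x, A x p * A p x * 2) + ∑ x, A p x * A p x * 2 := by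
      rw [Finset.mul_sum, ← Finset.sum_add_distrib]
      exact Finset.sum_congr rfl fun x _ => by ring
    rw [e1, e2, e3]
    ring
  · rw [offdiag_split (fun i j => A i j * A i j + A i j * A j i),
      single_split (fun i => (A i p + A p i) * (A i p + A p i)) p]
    have d1 : ∑ i, (A i i * A i i + A i i * A i i) = 2 * ∑ i, (A i i) ^ 2 := by
      rw [Finset.mul_sum]
      exact Finset.sum_congr rfl fun i _ => by ring
    have d2 : ∑ i, ∑ j ∈ Finset.univ.filter (fun j => j < i),
          ((A i j * A i j + A i j * A j i) + (A j i * A j i + A j i * A i j))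
        = ∑ i, ∑ j ∈ Finset.univ.filter (fun j => j < i), (A i j + A j i) ^ 2 :=
      Finset.sum_congr rfl fun i _ => Finset.sum_congr rfl fun j _ => by ring
    have d3 : ∑ i ∈ Finset.univ.filter (fun i => i < p), (A i p + A p i) * (A i p + A p i)
        = ∑ j ∈ Finset.univ.filter (fun j => j < p), (A p j + A j p) ^ 2 :=
      Finset.sum_congr rfl fun i _ => by ring
    have d4 : ∑ i ∈ Finset.univ.filter (fun i => p < i), (A i p + A p i) * (A i p + A p i)
        = ∑ i ∈ Finset.univ.filter (fun i => p < i), (A i p + A p i) ^ 2 :=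
      Finset.sum_congr rfl fun i _ => by ring
    rw [d1, d2, d3, d4]
    ring
end

section
/- For every index p ∈ {1,…,d}, the cross term between the strictly lower and strictly upper triangular parts satisfies: (i) for n = 0, E[ (Σ_{i>j} A_{i,j} u_i u_j) · (Σ_{k<ℓ} A_{k,ℓ} u_k u_ℓ) ] = Σ_{i>j} A_{i,j} A_{j,i}; (ii) for n = 1, E[ (Σ_{i>j} A_{i,j} u_i u_j u_p) · (Σ_{k<ℓ} A_{k,ℓ} u_k u_ℓ u_p) ] = Σ_{i>j} A_{i,j} A_{j,i} + 2·Σ_{i : i>p} A_{i,p} A_{p,i} + 2·Σ_{j : j<p} A_{p,j} A_{j,p}; (iii) for n = 2, E[ (Σ_{i>j} A_{i,j} u_i u_j u_p²) · (Σ_{k<ℓ} A_{k,ℓ} u_k u_ℓ u_p²) ] = 3·Σ_{i>j} A_{i,j} A_{j,i} + 12·Σ_{i : i>p} A_{i,p} A_{p,i} + 12·Σ_{j : j<p} A_{p,j} A_{j,p}. Here Σ_{i>j} ranges over pairs with 1 ≤ j < i ≤ d and Σ_{k<ℓ} over pairs with 1 ≤ k < ℓ ≤ d. -/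
open MeasureTheory ProbabilityTheory Finset

section Aux
open Real
open scoped NNReal ENNReal

namespace CrossAux

noncomputable def g (n : ℕ) : ℝ := ∫ x : ℝ, x ^ n * rexp (-x ^ 2 / 2)
noncomputable def M (n : ℕ) : ℝ := ∫ x, x ^ n ∂(gaussianReal 0 1)

lemma integrable_g (n : ℕ) : Integrable fun x : ℝ => x ^ n * rexp (-x ^ 2 / 2) := by
  have h := integrable_rpow_mul_exp_neg_mul_sq (b := (1:ℝ)/2) (by norm_num)
    (s := (n : ℝ)) (neg_one_lt_zero.trans_le (Nat.cast_nonneg n))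
  have he : ∀ x : ℝ, x ^ (n : ℝ) * rexp (-(1/2) * x ^ 2) = x ^ n * rexp (-x ^ 2 / 2) := by
    intro x; rw [Real.rpow_natCast]; ring_nf
  simpa only [he] using h

lemma g_odd (n : ℕ) (hn : Odd n) : g n = 0 := by
  have h1 := integral_neg_eq_self (fun y : ℝ => y ^ n * rexp (-y ^ 2 / 2)) volume
  have h2 : ∀ x : ℝ, (-x) ^ n * rexp (-(-x) ^ 2 / 2) = -(x ^ n * rexp (-x ^ 2 / 2)) := by
    intro x; rw [hn.neg_pow, neg_sq]; ring
  simp only [h2] at h1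
  rw [integral_neg] at h1
  have : g n = - g n := by unfold g; linarith [h1]
  linarith [this]

lemma g_even (n : ℕ) (hn : Even n) :
    g n = 2 * ((1/2 : ℝ) ^ (-((n : ℝ) + 1) / 2) * (1 / 2) * Real.Gamma (((n : ℝ) + 1) / 2)) := by
  have h1 : g n = ∫ x : ℝ, (fun y : ℝ => y ^ n * rexp (-y ^ 2 / 2)) |x| := by
    unfold g; congr 1; funext x
    simp only [hn.pow_abs, sq_abs]
  have h2 := integral_comp_abs (f := fun y : ℝ => y ^ n * rexp (-y ^ 2 / 2))
  rw [h1, h2,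
    ← integral_rpow_mul_exp_neg_mul_rpow (p := 2) (q := (n : ℝ)) (b := 1/2)
      two_pos (neg_one_lt_zero.trans_le (Nat.cast_nonneg n)) (by norm_num)]
  congr 1
  refine setIntegral_congr_fun measurableSet_Ioi fun x _ => ?_
  rw [show (2:ℝ) = ((2:ℕ):ℝ) by norm_num, Real.rpow_natCast, Real.rpow_natCast]
  push_cast
  ring_nf

lemma rpow_half_pow (k : ℕ) :
    ((1:ℝ)/2) ^ (-((2 * (k:ℝ)) + 1) / 2) = 2 ^ k * √2 := by
  have h2 : (0:ℝ) < 2 := two_pos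
  rw [show ((1:ℝ)/2) = (2:ℝ) ^ (-1 : ℝ) by rw [Real.rpow_neg_one]; norm_num]
  rw [← Real.rpow_mul h2.le]
  rw [show (-1 : ℝ) * (-(2 * (k:ℝ) + 1) / 2) = (k:ℝ) + 1/2 by ring]
  rw [Real.rpow_add h2, Real.rpow_natCast, ← Real.sqrt_eq_rpow]

lemma gamma_three_half : Real.Gamma (3/2) = (1/2) * √π := by
  rw [show (3/2 : ℝ) = 1/2 + 1 by norm_num, Real.Gamma_add_one (by norm_num),
    Real.Gamma_one_half_eq]

lemma gamma_five_half : Real.Gamma (5/2) = (3/4) * √π := by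
  rw [show (5/2 : ℝ) = 3/2 + 1 by norm_num, Real.Gamma_add_one (by norm_num),
    gamma_three_half]; ring

lemma gamma_seven_half : Real.Gamma (7/2) = (15/8) * √π := by
  rw [show (7/2 : ℝ) = 5/2 + 1 by norm_num, Real.Gamma_add_one (by norm_num),
    gamma_five_half]; ring

lemma g_two : g 2 = √2 * √π := by
  have h := g_even 2 (by norm_num)
  rw [show (((2:ℕ):ℝ) + 1) / 2 = 3/2 by norm_num,
    show (-(((2:ℕ):ℝ) + 1) / 2) = -(2 * ((1:ℕ):ℝ) + 1) / 2 by norm_num] at h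
  rw [h, rpow_half_pow, gamma_three_half]; ring

lemma g_four : g 4 = 3 * (√2 * √π) := by
  have h := g_even 4 (by decide)
  rw [show (((4:ℕ):ℝ) + 1) / 2 = 5/2 by norm_num,
    show (-(((4:ℕ):ℝ) + 1) / 2) = -(2 * ((2:ℕ):ℝ) + 1) / 2 by norm_num] at h
  rw [h, rpow_half_pow, gamma_five_half]; ring

lemma g_six : g 6 = 15 * (√2 * √π) := by
  have h := g_even 6 (by decide)
  rw [show (((6:ℕ):ℝ) + 1) / 2 = 7/2 by norm_num,
    show (-(((6:ℕ):ℝ) + 1) / 2) = -(2 * ((3:ℕ):ℝ) + 1) / 2 by norm_num] at h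
  rw [h, rpow_half_pow, gamma_seven_half]; ring

lemma pdf_smul_eq (n : ℕ) : (fun x : ℝ => (Real.toNNReal (gaussianPDFReal 0 1 x)) • x ^ n)
    = fun x : ℝ => (√2 * √π)⁻¹ * (x ^ n * rexp (-x ^ 2 / 2)) := by
  funext x
  rw [NNReal.smul_def, smul_eq_mul, Real.coe_toNNReal _ (gaussianPDFReal_nonneg 0 1 x),
    gaussianPDFReal]
  push_cast
  rw [mul_one, sub_zero, ← Real.sqrt_mul (by norm_num : (0:ℝ) ≤ 2)]
  ring_nf

lemma hmeas : Measurable fun x : ℝ => Real.toNNReal (gaussianPDFReal 0 1 x) :=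
  (measurable_gaussianPDFReal 0 1).real_toNNReal

lemma hdens : gaussianReal 0 1
    = (volume : Measure ℝ).withDensity
        fun x => ((Real.toNNReal (gaussianPDFReal 0 1 x) : ℝ≥0) : ℝ≥0∞) := by
  rw [gaussianReal_of_var_ne_zero 0 one_ne_zero, gaussianPDF_def]
  congr 1

lemma integrable_pow (n : ℕ) : Integrable (fun x : ℝ => x ^ n) (gaussianReal 0 1) := by
  rw [hdens]
  refine (integrable_withDensity_iff_integrable_smul hmeas).2 ?_
  rw [pdf_smul_eq]
  exact (integrable_g n).const_mul _

lemma M_eq (n : ℕ) : M n = (√2 * √π)⁻¹ * g n := by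
  rw [M, hdens, integral_withDensity_eq_integral_smul hmeas, pdf_smul_eq, integral_const_mul, g]

lemma sqrtsqrt_pos : (0:ℝ) < √2 * √π :=
  mul_pos (Real.sqrt_pos.2 two_pos) (Real.sqrt_pos.2 Real.pi_pos)

lemma M_zero : M 0 = 1 := by simp [M]

lemma M_two : M 2 = 1 := by
  rw [M_eq, g_two, inv_mul_cancel₀ sqrtsqrt_pos.ne']

lemma M_four : M 4 = 3 := by
  rw [M_eq, g_four, ← mul_assoc, mul_comm ((√2*√π)⁻¹) 3, mul_assoc,
    inv_mul_cancel₀ sqrtsqrt_pos.ne', mul_one]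

lemma M_six : M 6 = 15 := by
  rw [M_eq, g_six, ← mul_assoc, mul_comm ((√2*√π)⁻¹) 15, mul_assoc,
    inv_mul_cancel₀ sqrtsqrt_pos.ne', mul_one]

lemma M_odd (n : ℕ) (hn : Odd n) : M n = 0 := by
  rw [M_eq, g_odd n hn, mul_zero]

section Pi

variable {d : ℕ}

lemma integral_mono_pi (e : Fin d → ℕ) :
    ∫ u, ∏ m, u m ^ e m ∂(stdGaussianVec d) = ∏ m, M (e m) := by
  letI : MeasureSpace ℝ := ⟨gaussianReal 0 1⟩
  haveI : SigmaFinite (volume : Measure ℝ) :=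
    inferInstanceAs (SigmaFinite (gaussianReal 0 1))
  exact MeasureTheory.integral_fintype_prod_eq_prod (ι := Fin d) (E := fun _ => ℝ)
    (f := fun m x => x ^ e m)

lemma integrable_mono_pi (e : Fin d → ℕ) :
    Integrable (fun u : Fin d → ℝ => ∏ m, u m ^ e m) (stdGaussianVec d) := by
  letI : MeasureSpace ℝ := ⟨gaussianReal 0 1⟩
  haveI : SigmaFinite (volume : Measure ℝ) :=
    inferInstanceAs (SigmaFinite (gaussianReal 0 1))
  exact MeasureTheory.Integrable.fintype_prod (f := fun m x => x ^ e m)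
    fun m => integrable_pow (e m)

end Pi

end CrossAux

namespace Quad
variable {d : ℕ}

def e5 (i j k l p : Fin d) (c : ℕ) : Fin d → ℕ := fun m =>
  (if m = i then 1 else 0) + (if m = j then 1 else 0) + (if m = k then 1 else 0)
    + (if m = l then 1 else 0) + (if m = p then c else 0)

lemma mono_eq (i j k l p : Fin d) (c : ℕ) (u : Fin d → ℝ) :
    u i * u j * u k * u l * u p ^ c = ∏ m, u m ^ e5 i j k l p c m := by
  simp only [e5, pow_add, Finset.prod_mul_distrib, pow_ite, pow_one, pow_zero,
    Finset.prod_ite_eq', Finset.mem_univ, if_true]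

lemma integrable_base (i j k l p : Fin d) (c : ℕ) :
    Integrable (fun u : Fin d → ℝ => u i * u j * u k * u l * u p ^ c) (stdGaussianVec d) := by
  have h : (fun u : Fin d → ℝ => u i * u j * u k * u l * u p ^ c)
      = fun u => ∏ m, u m ^ e5 i j k l p c m := funext (mono_eq i j k l p c)
  rw [h]
  exact CrossAux.integrable_mono_pi _

lemma prod_M_subset (e : Fin d → ℕ) (s : Finset (Fin d)) (h : ∀ m ∉ s, e m = 0) :
    ∏ m, CrossAux.M (e m) = ∏ m ∈ s, CrossAux.M (e m) :=
  (Finset.prod_subset s.subset_univ fun m _ hm => by rw [h m hm, CrossAux.M_zero]).symm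

lemma integral_quad (i j k l p : Fin d) (c : ℕ) (hc : Even c) (hij : j < i) (hkl : k < l) :
    ∫ u, u i * u j * u k * u l * u p ^ c ∂(stdGaussianVec d)
      = if i = l ∧ j = k then
          (if p = i ∨ p = j then CrossAux.M (2 + c) else CrossAux.M c) else 0 := by
  have hrw : ∫ u, u i * u j * u k * u l * u p ^ c ∂(stdGaussianVec d)
      = ∏ m, CrossAux.M (e5 i j k l p c m) := by
    rw [show (fun u : Fin d → ℝ => u i * u j * u k * u l * u p ^ c)
        = fun u => ∏ m, u m ^ e5 i j k l p c m from funext (mono_eq i j k l p c)]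
    exact CrossAux.integral_mono_pi _
  by_cases hif : i = l ∧ j = k
  · obtain ⟨hil, hjk⟩ := hif
    subst hil; subst hjk
    have hij' : i ≠ j := ne_of_gt hij
    rw [hrw, if_pos ⟨rfl, rfl⟩]
    by_cases hpi : p = i
    · subst hpi
      rw [prod_M_subset _ {p, j} (fun m hm => by
        simp only [Finset.mem_insert, Finset.mem_singleton, not_or] at hm
        simp [e5, hm.1, hm.2])]
      rw [Finset.prod_pair hij', if_pos (Or.inl rfl)]
      have h1 : e5 p j j p p c p = 2 + c := by simp [e5, hij']
      have h2 : e5 p j j p p c j = 2 := by simp [e5, hij'.symm]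
      rw [h1, h2, CrossAux.M_two, mul_one]
    · by_cases hpj : p = j
      · subst hpj
        rw [prod_M_subset _ {i, p} (fun m hm => by
          simp only [Finset.mem_insert, Finset.mem_singleton, not_or] at hm
          simp [e5, hm.1, hm.2])]
        rw [Finset.prod_pair hij', if_pos (Or.inr rfl)]
        have h1 : e5 i p p i p c i = 2 := by simp [e5, hij']
        have h2 : e5 i p p i p c p = 2 + c := by simp [e5, hij'.symm]
        rw [h1, h2, CrossAux.M_two, one_mul]
      · rw [prod_M_subset _ {i, j, p} (fun m hm => by
          simp only [Finset.mem_insert, Finset.mem_singleton, not_or] at hm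
          simp [e5, hm.1, hm.2.1, hm.2.2])]
        have hip : i ≠ p := fun h => hpi h.symm
        have hjp : j ≠ p := fun h => hpj h.symm
        rw [Finset.prod_insert (by simp [hij', hip]),
          Finset.prod_pair hjp, if_neg (not_or.mpr ⟨hpi, hpj⟩)]
        have h1 : e5 i j j i p c i = 2 := by simp [e5, hij', hip]
        have h2 : e5 i j j i p c j = 2 := by simp [e5, hij'.symm, hjp]
        have h3 : e5 i j j i p c p = c := by simp [e5, hpi, hpj]
        rw [h1, h2, h3, CrossAux.M_two, one_mul, one_mul]
  · rw [hrw, if_neg hif]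
    obtain ⟨t, rfl⟩ := hc
    have hodd : ∃ m, Odd (e5 i j k l p (t + t) m) := by
      by_cases hik : i = k
      · refine ⟨l, ?_⟩
        have hil' : i < l := lt_of_le_of_lt (le_of_eq hik) hkl
        have h1 : l ≠ i := ne_of_gt hil'
        have h2 : l ≠ j := ne_of_gt (hij.trans hil')
        have h3 : l ≠ k := ne_of_gt hkl
        simp only [e5, h1, h2, h3, if_false, Nat.odd_iff]
        split_ifs <;> omega
      · by_cases hil : i = l
        · have hjk : j ≠ k := fun h => hif ⟨hil, h⟩
          refine ⟨j, ?_⟩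
          have h1 : j ≠ i := ne_of_lt hij
          have h2 : j ≠ l := ne_of_lt (hil ▸ hij)
          simp only [e5, h1, hjk, h2, if_false, if_true, Nat.odd_iff]
          split_ifs <;> omega
        · refine ⟨i, ?_⟩
          have h1 : i ≠ j := ne_of_gt hij
          simp only [e5, h1, hik, hil, if_false, if_true, Nat.odd_iff]
          split_ifs <;> omega
    obtain ⟨m, hm⟩ := hodd
    exact Finset.prod_eq_zero (Finset.mem_univ m) (CrossAux.M_odd _ hm)

end Quad

namespace Main
open Quad
variable {d : ℕ}

lemma expand_integral (A : Matrix (Fin d) (Fin d) ℝ) (p : Fin d) (c : ℕ) :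
    ∫ u, ∑ i, ∑ j ∈ Finset.univ.filter (fun j => j < i), ∑ k,
        ∑ l ∈ Finset.univ.filter (fun l => k < l),
        (A i j * A k l) * (u i * u j * u k * u l * u p ^ c) ∂(stdGaussianVec d)
      = ∑ i, ∑ j ∈ Finset.univ.filter (fun j => j < i), ∑ k,
        ∑ l ∈ Finset.univ.filter (fun l => k < l),
        (A i j * A k l) * ∫ u, u i * u j * u k * u l * u p ^ c ∂(stdGaussianVec d) := by
  have hInt : ∀ i j k l : Fin d, Integrable
      (fun u : Fin d → ℝ => (A i j * A k l) * (u i * u j * u k * u l * u p ^ c))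
      (stdGaussianVec d) := fun i j k l => (integrable_base i j k l p c).const_mul _
  rw [integral_finset_sum _ fun i _ => integrable_finset_sum _ fun j _ =>
    integrable_finset_sum _ fun k _ => integrable_finset_sum _ fun l _ => hInt i j k l]
  refine Finset.sum_congr rfl fun i _ => ?_
  rw [integral_finset_sum _ fun j _ => integrable_finset_sum _ fun k _ =>
    integrable_finset_sum _ fun l _ => hInt i j k l]
  refine Finset.sum_congr rfl fun j _ => ?_
  rw [integral_finset_sum _ fun k _ => integrable_finset_sum _ fun l _ => hInt i j k l]
  refine Finset.sum_congr rfl fun k _ => ?_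
  rw [integral_finset_sum _ fun l _ => hInt i j k l]
  exact Finset.sum_congr rfl fun l _ => integral_const_mul _ _

lemma collapse (A : Matrix (Fin d) (Fin d) ℝ) (V : ℝ) (i j : Fin d) (hij : j < i) :
    ∑ k, ∑ l ∈ Finset.univ.filter (fun l => k < l),
        (A i j * A k l) * (if i = l ∧ j = k then V else 0)
      = A i j * A j i * V := by
  have step : ∀ k, ∑ l ∈ Finset.univ.filter (fun l => k < l),
      (A i j * A k l) * (if i = l ∧ j = k then V else 0)
      = if j = k then (if k < i then A i j * A k i * V else 0) else 0 := by
    intro k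
    have h : ∀ l, (A i j * A k l) * (if i = l ∧ j = k then V else 0)
        = if i = l then (if j = k then A i j * A k l * V else 0) else 0 := by
      intro l; rw [ite_and]; split_ifs <;> ring
    simp only [h]
    rw [Finset.sum_ite_eq (Finset.univ.filter fun l => k < l) i]
    simp only [Finset.mem_filter, Finset.mem_univ, true_and]
    split_ifs <;> rfl
  simp only [step]
  rw [Finset.sum_ite_eq Finset.univ j]
  simp [hij]

lemma main_sum (A : Matrix (Fin d) (Fin d) ℝ) (p : Fin d) (c : ℕ) (hc : Even c) :
    (∑ i, ∑ j ∈ Finset.univ.filter (fun j => j < i), ∑ k,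
        ∑ l ∈ Finset.univ.filter (fun l => k < l),
        (A i j * A k l) * ∫ u, u i * u j * u k * u l * u p ^ c ∂(stdGaussianVec d))
      = ∑ i, ∑ j ∈ Finset.univ.filter (fun j => j < i),
          A i j * A j i * (if p = i ∨ p = j then CrossAux.M (2 + c) else CrossAux.M c) := by
  refine Finset.sum_congr rfl fun i _ => Finset.sum_congr rfl fun j hj => ?_
  have hij : j < i := by simpa using hj
  have h1 : ∀ k, ∑ l ∈ Finset.univ.filter (fun l => k < l),
      (A i j * A k l) * ∫ u, u i * u j * u k * u l * u p ^ c ∂(stdGaussianVec d)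
      = ∑ l ∈ Finset.univ.filter (fun l => k < l), (A i j * A k l) *
          (if i = l ∧ j = k then
            (if p = i ∨ p = j then CrossAux.M (2 + c) else CrossAux.M c) else 0) :=
    fun k => Finset.sum_congr rfl fun l hl => by
      rw [integral_quad i j k l p c hc hij (by simpa using hl)]
  exact (Finset.sum_congr rfl fun k _ => h1 k).trans (collapse A _ i j hij)

lemma ite_or_split {P Q : Prop} [Decidable P] [Decidable Q] (hPQ : ¬(P ∧ Q)) (t r s : ℝ) :
    t * (if P ∨ Q then r else s)
      = t * s + ((if P then t * (r - s) else 0) + (if Q then t * (r - s) else 0)) := by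
  by_cases h1 : P
  · have h2 : ¬Q := fun h => hPQ ⟨h1, h⟩
    rw [if_pos (Or.inl h1), if_pos h1, if_neg h2]; ring
  · by_cases h2 : Q
    · rw [if_pos (Or.inr h2), if_neg h1, if_pos h2]; ring
    · rw [if_neg (not_or.mpr ⟨h1, h2⟩), if_neg h1, if_neg h2]; ring

lemma split_sum (x : Fin d → Fin d → ℝ) (p : Fin d) (r s : ℝ) :
    ∑ i, ∑ j ∈ Finset.univ.filter (fun j => j < i), x i j * (if p = i ∨ p = j then r else s)
      = s * (∑ i, ∑ j ∈ Finset.univ.filter (fun j => j < i), x i j)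
        + (r - s) * (∑ j ∈ Finset.univ.filter (fun j => j < p), x p j)
        + (r - s) * (∑ i ∈ Finset.univ.filter (fun i => p < i), x i p) := by
  have h1 : ∀ i : Fin d, ∀ j ∈ Finset.univ.filter (fun j => j < i),
      x i j * (if p = i ∨ p = j then r else s)
      = x i j * s + ((if p = i then x i j * (r - s) else 0)
          + (if p = j then x i j * (r - s) else 0)) := by
    intro i j hj
    have hij : j < i := by simpa using hj
    exact ite_or_split (fun h => (ne_of_gt hij) (h.1.symm.trans h.2)) _ r s
  rw [Finset.sum_congr rfl fun i _ => Finset.sum_congr rfl (h1 i)]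
  simp only [Finset.sum_add_distrib]
  have hA : ∑ i, ∑ j ∈ Finset.univ.filter (fun j => j < i), x i j * s
      = s * (∑ i, ∑ j ∈ Finset.univ.filter (fun j => j < i), x i j) := by
    rw [Finset.mul_sum]
    exact Finset.sum_congr rfl fun i _ => by
      rw [Finset.mul_sum]; exact Finset.sum_congr rfl fun j _ => mul_comm _ _
  have hB : ∑ i, ∑ j ∈ Finset.univ.filter (fun j => j < i),
      (if p = i then x i j * (r - s) else 0)
      = (r - s) * ∑ j ∈ Finset.univ.filter (fun j => j < p), x p j := by
    have e1 : ∀ i : Fin d, ∑ j ∈ Finset.univ.filter (fun j => j < i),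
        (if p = i then x i j * (r - s) else 0)
        = if p = i then (∑ j ∈ Finset.univ.filter (fun j => j < i), x i j * (r - s)) else 0 :=
      fun i => by split_ifs <;> simp
    rw [Finset.sum_congr rfl fun i _ => e1 i, Finset.sum_ite_eq Finset.univ p,
      if_pos (Finset.mem_univ p), Finset.mul_sum]
    exact Finset.sum_congr rfl fun j _ => mul_comm _ _
  have hC : ∑ i, ∑ j ∈ Finset.univ.filter (fun j => j < i),
      (if p = j then x i j * (r - s) else 0)
      = (r - s) * ∑ i ∈ Finset.univ.filter (fun i => p < i), x i p := by
    have e1 : ∀ i : Fin d, ∑ j ∈ Finset.univ.filter (fun j => j < i),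
        (if p = j then x i j * (r - s) else 0)
        = if p < i then x i p * (r - s) else 0 := fun i => by
      rw [Finset.sum_ite_eq (Finset.univ.filter fun j => j < i) p]
      simp [Finset.mem_filter]
    rw [Finset.sum_congr rfl fun i _ => e1 i, Finset.mul_sum, Finset.sum_filter]
    exact Finset.sum_congr rfl fun i _ => by split_ifs <;> ring
  rw [hA, hB, hC]
  ring

end Main

end Aux

theorem lower_upper_cross_term {d : ℕ} (hd : 1 ≤ d)
    (A : Matrix (Fin d) (Fin d) ℝ) (p : Fin d) :
    (∫ u, (∑ i, ∑ j ∈ Finset.univ.filter (fun j => j < i), A i j * u i * u j)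
          * (∑ k, ∑ l ∈ Finset.univ.filter (fun l => k < l), A k l * u k * u l)
        ∂(stdGaussianVec d)
      = ∑ i, ∑ j ∈ Finset.univ.filter (fun j => j < i), A i j * A j i)
    ∧ (∫ u, (∑ i, ∑ j ∈ Finset.univ.filter (fun j => j < i),
            A i j * u i * u j * u p)
          * (∑ k, ∑ l ∈ Finset.univ.filter (fun l => k < l),
            A k l * u k * u l * u p)
        ∂(stdGaussianVec d)
      = (∑ i, ∑ j ∈ Finset.univ.filter (fun j => j < i), A i j * A j i)
        + 2 * (∑ i ∈ Finset.univ.filter (fun i => p < i), A i p * A p i)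
        + 2 * (∑ j ∈ Finset.univ.filter (fun j => j < p), A p j * A j p))
    ∧ (∫ u, (∑ i, ∑ j ∈ Finset.univ.filter (fun j => j < i),
            A i j * u i * u j * (u p) ^ 2)
          * (∑ k, ∑ l ∈ Finset.univ.filter (fun l => k < l),
            A k l * u k * u l * (u p) ^ 2)
        ∂(stdGaussianVec d)
      = 3 * (∑ i, ∑ j ∈ Finset.univ.filter (fun j => j < i), A i j * A j i)
        + 12 * (∑ i ∈ Finset.univ.filter (fun i => p < i), A i p * A p i)
        + 12 * (∑ j ∈ Finset.univ.filter (fun j => j < p), A p j * A j p)) := by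
  refine ⟨?_, ?_, ?_⟩
  · have key : ∀ u : Fin d → ℝ,
        (∑ i, ∑ j ∈ Finset.univ.filter (fun j => j < i), A i j * u i * u j)
          * (∑ k, ∑ l ∈ Finset.univ.filter (fun l => k < l), A k l * u k * u l)
        = ∑ i, ∑ j ∈ Finset.univ.filter (fun j => j < i), ∑ k,
            ∑ l ∈ Finset.univ.filter (fun l => k < l),
            (A i j * A k l) * (u i * u j * u k * u l * u p ^ 0) := by
      intro u
      rw [Finset.sum_mul_sum]
      have hik : ∀ i k : Fin d,
          (∑ j ∈ Finset.univ.filter (fun j => j < i), A i j * u i * u j)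
            * (∑ l ∈ Finset.univ.filter (fun l => k < l), A k l * u k * u l)
          = ∑ j ∈ Finset.univ.filter (fun j => j < i),
              ∑ l ∈ Finset.univ.filter (fun l => k < l),
              (A i j * A k l) * (u i * u j * u k * u l * u p ^ 0) := by
        intro i k
        rw [Finset.sum_mul_sum]
        exact Finset.sum_congr rfl fun j _ =>
          Finset.sum_congr rfl fun l _ => by ring
      simp only [hik]
      exact Finset.sum_congr rfl fun i _ => Finset.sum_comm
    simp only [key]
    rw [Main.expand_integral A p 0, Main.main_sum A p 0 ⟨0, rfl⟩]
    simp only [show CrossAux.M (2 + 0) = 1 from by norm_num [CrossAux.M_two],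
      show CrossAux.M 0 = 1 from CrossAux.M_zero]
    refine (Main.split_sum (fun i j => A i j * A j i) p 1 1).trans ?_
    beta_reduce
    ring
  · have key : ∀ u : Fin d → ℝ,
        (∑ i, ∑ j ∈ Finset.univ.filter (fun j => j < i), A i j * u i * u j * u p)
          * (∑ k, ∑ l ∈ Finset.univ.filter (fun l => k < l), A k l * u k * u l * u p)
        = ∑ i, ∑ j ∈ Finset.univ.filter (fun j => j < i), ∑ k,
            ∑ l ∈ Finset.univ.filter (fun l => k < l),
            (A i j * A k l) * (u i * u j * u k * u l * u p ^ 2) := by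
      intro u
      rw [Finset.sum_mul_sum]
      have hik : ∀ i k : Fin d,
          (∑ j ∈ Finset.univ.filter (fun j => j < i), A i j * u i * u j * u p)
            * (∑ l ∈ Finset.univ.filter (fun l => k < l), A k l * u k * u l * u p)
          = ∑ j ∈ Finset.univ.filter (fun j => j < i),
              ∑ l ∈ Finset.univ.filter (fun l => k < l),
              (A i j * A k l) * (u i * u j * u k * u l * u p ^ 2) := by
        intro i k
        rw [Finset.sum_mul_sum]
        exact Finset.sum_congr rfl fun j _ =>
          Finset.sum_congr rfl fun l _ => by ring
      simp only [hik]
      exact Finset.sum_congr rfl fun i _ => Finset.sum_comm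
    simp only [key]
    rw [Main.expand_integral A p 2, Main.main_sum A p 2 ⟨1, rfl⟩]
    simp only [show CrossAux.M (2 + 2) = 3 from by norm_num [CrossAux.M_four],
      show CrossAux.M 2 = 1 from CrossAux.M_two]
    refine (Main.split_sum (fun i j => A i j * A j i) p 3 1).trans ?_
    beta_reduce
    ring
  · have key : ∀ u : Fin d → ℝ,
        (∑ i, ∑ j ∈ Finset.univ.filter (fun j => j < i), A i j * u i * u j * (u p) ^ 2)
          * (∑ k, ∑ l ∈ Finset.univ.filter (fun l => k < l), A k l * u k * u l * (u p) ^ 2)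
        = ∑ i, ∑ j ∈ Finset.univ.filter (fun j => j < i), ∑ k,
            ∑ l ∈ Finset.univ.filter (fun l => k < l),
            (A i j * A k l) * (u i * u j * u k * u l * u p ^ 4) := by
      intro u
      rw [Finset.sum_mul_sum]
      have hik : ∀ i k : Fin d,
          (∑ j ∈ Finset.univ.filter (fun j => j < i), A i j * u i * u j * (u p) ^ 2)
            * (∑ l ∈ Finset.univ.filter (fun l => k < l), A k l * u k * u l * (u p) ^ 2)
          = ∑ j ∈ Finset.univ.filter (fun j => j < i),
              ∑ l ∈ Finset.univ.filter (fun l => k < l),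
              (A i j * A k l) * (u i * u j * u k * u l * u p ^ 4) := by
        intro i k
        rw [Finset.sum_mul_sum]
        exact Finset.sum_congr rfl fun j _ =>
          Finset.sum_congr rfl fun l _ => by ring
      simp only [hik]
      exact Finset.sum_congr rfl fun i _ => Finset.sum_comm
    simp only [key]
    rw [Main.expand_integral A p 4, Main.main_sum A p 4 ⟨2, rfl⟩]
    simp only [show CrossAux.M (2 + 4) = 15 from by norm_num [CrossAux.M_six],
      show CrossAux.M 4 = 3 from CrossAux.M_four]
    refine (Main.split_sum (fun i j => A i j * A j i) p 15 3).trans ?_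
    beta_reduce
    ring
end

section
/- For every index p ∈ {1,…,d}, the off-diagonal part with one extra factor u_p satisfies E[ (Σ_{i≠j} A_{i,j} u_i u_j u_p)² ] = Σ_{i>j} (A_{i,j} + A_{j,i})² + 2·Σ_{i : i>p} (A_{i,p} + A_{p,i})² + 2·Σ_{j : j<p} (A_{p,j} + A_{j,p})², where Σ_{i≠j} ranges over ordered pairs (i,j) with i ≠ j and Σ_{i>j} over pairs with 1 ≤ j < i ≤ d. -/
open MeasureTheory ProbabilityTheory Finset

namespace OffdiagAux

open Real
open scoped ENNReal NNReal

variable {d : ℕ}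

noncomputable def M (n : ℕ) : ℝ := ∫ x, x ^ n ∂(gaussianReal 0 1)

lemma integrable_pow_exp (n : ℕ) : Integrable (fun x : ℝ => x ^ n * rexp (-x ^ 2 / 2)) := by
  have h := integrable_rpow_mul_exp_neg_mul_sq (b := 1/2) (by norm_num) (s := n)
    (neg_one_lt_zero.trans_le (Nat.cast_nonneg n))
  simp only [Real.rpow_natCast] at h
  convert h using 2 with x
  ring_nf

lemma gaussianPDFReal_simp (x : ℝ) :
    gaussianPDFReal 0 1 x = (Real.sqrt (2 * π))⁻¹ * rexp (-x ^ 2 / 2) := by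
  simp [gaussianPDFReal, NNReal.coe_one]

lemma integral_gaussianReal_eq (f : ℝ → ℝ) :
    ∫ x, f x ∂(gaussianReal 0 1)
      = ∫ x, gaussianPDFReal 0 1 x * f x := by
  rw [gaussianReal_of_var_ne_zero 0 one_ne_zero]
  have hmeas : Measurable fun x : ℝ => (gaussianPDFReal 0 1 x).toNNReal :=
    (measurable_gaussianPDFReal 0 1).real_toNNReal
  have h : (gaussianPDF 0 1) = fun x => (((gaussianPDFReal 0 1 x).toNNReal : ℝ≥0) : ℝ≥0∞) := by
    ext x; simp [gaussianPDF, ENNReal.ofReal]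
  rw [h, integral_withDensity_eq_integral_smul hmeas]
  congr 1 with x
  simp [NNReal.smul_def, Real.coe_toNNReal _ (gaussianPDFReal_nonneg 0 1 x)]

lemma integrable_pow_gaussian (n : ℕ) : Integrable (fun x : ℝ => x ^ n) (gaussianReal 0 1) := by
  rw [gaussianReal_of_var_ne_zero 0 one_ne_zero]
  have hmeas : Measurable fun x : ℝ => (gaussianPDFReal 0 1 x).toNNReal :=
    (measurable_gaussianPDFReal 0 1).real_toNNReal
  have h : (gaussianPDF 0 1) = fun x => (((gaussianPDFReal 0 1 x).toNNReal : ℝ≥0) : ℝ≥0∞) := by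
    ext x; simp [gaussianPDF, ENNReal.ofReal]
  rw [h, integrable_withDensity_iff_integrable_smul hmeas]
  have : (fun x : ℝ => (gaussianPDFReal 0 1 x).toNNReal • x ^ n)
      = fun x : ℝ => (Real.sqrt (2 * π))⁻¹ * (x ^ n * rexp (-x ^ 2 / 2)) := by
    ext x
    rw [NNReal.smul_def, Real.coe_toNNReal _ (gaussianPDFReal_nonneg 0 1 x),
      gaussianPDFReal_simp, smul_eq_mul]
    ring
  rw [this]
  exact (integrable_pow_exp n).const_mul _

lemma M_odd {n : ℕ} (hn : Odd n) : M n = 0 := by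
  rw [M, integral_gaussianReal_eq]
  have key : ∫ x : ℝ, gaussianPDFReal 0 1 x * x ^ n
      = -∫ x : ℝ, gaussianPDFReal 0 1 x * x ^ n := by
    nth_rewrite 1 [← integral_neg_eq_self (fun x : ℝ => gaussianPDFReal 0 1 x * x ^ n) volume]
    rw [← integral_neg]
    congr 1 with x
    rw [gaussianPDFReal_simp, gaussianPDFReal_simp, hn.neg_pow, neg_sq]
    ring
  linarith

example : M 1 = 0 := M_odd odd_one

-- first: reduce to Ioi
lemma J_even' (n : ℕ) :
    ∫ x : ℝ, x ^ (2 * n) * rexp (-x ^ 2 / 2)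
      = 2 * ((1/2:ℝ) ^ (-(((2*n:ℕ):ℝ) + 1) / 2) * (1 / 2) * Real.Gamma ((((2*n:ℕ):ℝ) + 1) / 2)) := by
  have habs : (fun x : ℝ => x ^ (2 * n) * rexp (-x ^ 2 / 2))
      = fun x : ℝ => |x| ^ (2 * n) * rexp (-|x| ^ 2 / 2) := by
    ext x
    rw [pow_mul, pow_mul, sq_abs]
  rw [habs, integral_comp_abs (f := fun x : ℝ => x ^ (2 * n) * rexp (-x ^ 2 / 2))]
  congr 1
  rw [← integral_rpow_mul_exp_neg_mul_rpow (p := 2) (q := (2*n:ℕ)) (by norm_num)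
    (neg_one_lt_zero.trans_le (Nat.cast_nonneg _)) (by norm_num)]
  refine setIntegral_congr_fun measurableSet_Ioi (fun x hx => ?_)
  rw [Real.rpow_natCast, Real.rpow_two]
  ring_nf

lemma M_zero : M 0 = 1 := by simp [M]

lemma sqrt2pi : Real.sqrt (2 * π) = Real.sqrt 2 * Real.sqrt π :=
  Real.sqrt_mul (by norm_num) _

lemma sqrt2pi_pos : 0 < Real.sqrt (2 * π) :=
  Real.sqrt_pos.mpr (by positivity)

lemma rpow_half_2 : (2:ℝ) ^ ((1:ℝ)/2) = Real.sqrt 2 := by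
  rw [Real.sqrt_eq_rpow]

lemma h32 : (1/2:ℝ) ^ (-(3/2:ℝ)) = 2 * Real.sqrt 2 := by
  rw [one_div, Real.inv_rpow (by norm_num : (0:ℝ) ≤ 2), ← Real.rpow_neg (by norm_num : (0:ℝ) ≤ 2),
    show (-(-(3/2:ℝ))) = 1 + 1/2 by ring, Real.rpow_add two_pos, Real.rpow_one, rpow_half_2]

lemma h52 : (1/2:ℝ) ^ (-(5/2:ℝ)) = 4 * Real.sqrt 2 := by
  rw [one_div, Real.inv_rpow (by norm_num : (0:ℝ) ≤ 2), ← Real.rpow_neg (by norm_num : (0:ℝ) ≤ 2),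
    show (-(-(5/2:ℝ))) = 2 + 1/2 by ring, Real.rpow_add two_pos, rpow_half_2]
  norm_num [Real.rpow_two]

lemma G32 : Real.Gamma (3/2 : ℝ) = Real.sqrt π / 2 := by
  rw [show (3/2:ℝ) = 1/2 + 1 by norm_num, Real.Gamma_add_one (by norm_num),
    Real.Gamma_one_half_eq]
  ring

lemma G52 : Real.Gamma (5/2 : ℝ) = 3 * Real.sqrt π / 4 := by
  rw [show (5/2:ℝ) = 3/2 + 1 by norm_num, Real.Gamma_add_one (by norm_num), G32]
  ring

lemma M_even_aux (n : ℕ) : M (2 * n) = (Real.sqrt (2 * π))⁻¹ *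
    (2 * ((1/2:ℝ) ^ (-(((2*n:ℕ):ℝ) + 1) / 2) * (1 / 2)
      * Real.Gamma ((((2*n:ℕ):ℝ) + 1) / 2))) := by
  rw [M, integral_gaussianReal_eq, ← J_even' n, ← MeasureTheory.integral_const_mul]
  congr 1 with x
  rw [gaussianPDFReal_simp]
  ring

lemma M_two : M 2 = 1 := by
  have := M_even_aux 1
  norm_num at this
  rw [this, show ((-(3/2)):ℝ) = -(3/2:ℝ) by norm_num] at *
  rw [this, h32, G32]
  have s2 : Real.sqrt 2 > 0 := Real.sqrt_pos.mpr (by norm_num)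
  have sp : Real.sqrt π > 0 := Real.sqrt_pos.mpr Real.pi_pos
  field_simp

lemma M_four : M 4 = 3 := by
  have := M_even_aux 2
  norm_num at this
  rw [this, show ((-(5/2)):ℝ) = -(5/2:ℝ) by norm_num] at *
  rw [this, h52, G52]
  have s2 : Real.sqrt 2 > 0 := Real.sqrt_pos.mpr (by norm_num)
  have sp : Real.sqrt π > 0 := Real.sqrt_pos.mpr Real.pi_pos
  field_simp

lemma integral_monomial {d : ℕ} (e : Fin d → ℕ) :
    ∫ u, ∏ c, u c ^ e c ∂(stdGaussianVec d) = ∏ c, M (e c) := by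
  letI : MeasureSpace ℝ := ⟨gaussianReal 0 1⟩
  haveI : SigmaFinite (volume : Measure ℝ) := by
    show SigmaFinite (gaussianReal 0 1); infer_instance
  exact MeasureTheory.integral_fintype_prod_eq_prod (fun i (x : ℝ) => x ^ e i)

lemma integrable_monomial {d : ℕ} (e : Fin d → ℕ) :
    Integrable (fun u => ∏ c, u c ^ e c) (stdGaussianVec d) := by
  letI : MeasureSpace ℝ := ⟨gaussianReal 0 1⟩
  haveI : SigmaFinite (volume : Measure ℝ) := by
    show SigmaFinite (gaussianReal 0 1); infer_instance
  exact MeasureTheory.Integrable.fintype_prod (f := fun i (x : ℝ) => x ^ e i)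
    (fun i => integrable_pow_gaussian (e i))

def e {d : ℕ} (i j k l p : Fin d) : Fin d → ℕ := fun c =>
  (if c = i then 1 else 0) + (if c = j then 1 else 0) + (if c = k then 1 else 0)
    + (if c = l then 1 else 0) + (if c = p then 2 else 0)

lemma prod_single {d : ℕ} (u : Fin d → ℝ) (a : Fin d) (n : ℕ) :
    ∏ c, u c ^ (if c = a then n else 0) = u a ^ n := by
  rw [Finset.prod_eq_single a (fun b _ hb => by simp [hb]) (fun h => absurd (Finset.mem_univ a) h)]
  simp

lemma monomial_eq {d : ℕ} (u : Fin d → ℝ) (i j k l p : Fin d) :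
    u i * u j * u k * u l * u p ^ 2 = ∏ c, u c ^ e i j k l p c := by
  simp only [e, pow_add, Finset.prod_mul_distrib, prod_single, pow_one]

lemma support2 {d : ℕ} (f : Fin d → ℝ) (i j : Fin d) (hij : i ≠ j)
    (hf : ∀ c, c ≠ i → c ≠ j → f c = 1) : ∏ c, f c = f i * f j := by
  rw [← Finset.prod_subset (Finset.subset_univ ({i, j} : Finset (Fin d)))
    (fun x _ hx => hf x (fun h => hx (by simp [h])) (fun h => hx (by simp [h]))),
    Finset.prod_insert (by simp [hij]), Finset.prod_singleton]

lemma support3 {d : ℕ} (f : Fin d → ℝ) (i j p : Fin d) (hij : i ≠ j) (hip : i ≠ p)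
    (hjp : j ≠ p) (hf : ∀ c, c ≠ i → c ≠ j → c ≠ p → f c = 1) :
    ∏ c, f c = f i * (f j * f p) := by
  rw [← Finset.prod_subset (Finset.subset_univ ({i, j, p} : Finset (Fin d)))
    (fun x _ hx => hf x (fun h => hx (by simp [h])) (fun h => hx (by simp [h]))
      (fun h => hx (by simp [h]))),
    Finset.prod_insert (by simp [hij, hip]), Finset.prod_insert (by simp [hjp]),
    Finset.prod_singleton]

lemma prod_M_match {d : ℕ} (i j p : Fin d) (hij : j ≠ i) :
    ∏ c, M ((if c = i then 1 else 0) + (if c = j then 1 else 0) + (if c = i then 1 else 0)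
      + (if c = j then 1 else 0) + (if c = p then 2 else 0))
      = if p = i ∨ p = j then 3 else 1 := by
  by_cases hpi : p = i
  · subst hpi
    rw [support2 _ p j (Ne.symm hij) (fun c hcp hcj => by simp [hcp, hcj, M_zero])]
    simp [hij, Ne.symm hij, M_four, M_two]
  · by_cases hpj : p = j
    · subst hpj
      rw [support2 _ i p hij.symm (fun c hci hcp => by simp [hci, hcp, M_zero])]
      simp [hij, Ne.symm hij, M_four, M_two, hpi]
    · rw [support3 _ i j p hij.symm (Ne.symm hpi) (Ne.symm hpj)
        (fun c hci hcj hcp => by simp [hci, hcj, hcp, M_zero])]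
      have hip : i ≠ p := fun h => hpi h.symm
      have hjp : j ≠ p := fun h => hpj h.symm
      simp [hij, Ne.symm hij, hpi, hpj, hip, hjp, M_two]

lemma prod_M_eval {d : ℕ} (p i j k l : Fin d) (hij : j ≠ i) (hkl : l ≠ k) :
    ∏ c, M (e i j k l p c)
      = if (k = i ∧ l = j) ∨ (k = j ∧ l = i) then (if p = i ∨ p = j then (3:ℝ) else 1)
        else 0 := by
  by_cases h1 : k = i ∧ l = j
  · obtain ⟨rfl, rfl⟩ := h1
    rw [if_pos (Or.inl ⟨rfl, rfl⟩)]
    exact prod_M_match k l p hij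
  · by_cases h2 : k = j ∧ l = i
    · obtain ⟨rfl, rfl⟩ := h2
      rw [if_pos (Or.inr ⟨rfl, rfl⟩)]
      rw [← prod_M_match l k p hij]
      apply Finset.prod_congr rfl
      intro c _
      congr 1
      simp only [e]
      ring
    · rw [if_neg (by tauto)]
      by_cases hki : k = i
      · subst hki
        have hlj : l ≠ j := fun h => h1 ⟨rfl, h⟩
        apply Finset.prod_eq_zero (Finset.mem_univ l)
        have : e k j k l p l = (if l = p then 3 else 1) := by
          simp only [e, if_neg hkl, if_neg hlj, if_pos rfl]
          split_ifs <;> rfl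
        rw [this]
        split_ifs
        · exact M_odd (by decide)
        · exact M_odd odd_one
      · by_cases hkj : k = j
        · subst hkj
          have hli : l ≠ i := fun h => h2 ⟨rfl, h⟩
          apply Finset.prod_eq_zero (Finset.mem_univ l)
          have he : e i k k l p l = (if l = p then 3 else 1) := by
            simp only [e, if_neg hli, if_neg hkl, if_pos rfl]
            split_ifs <;> rfl
          rw [he]
          split_ifs
          · exact M_odd (by decide)
          · exact M_odd odd_one
        · apply Finset.prod_eq_zero (Finset.mem_univ k)
          have : e i j k l p k = (if k = p then 3 else 1) := by
            simp only [e, if_neg hki, if_neg hkj, if_pos rfl, if_neg (Ne.symm hkl)]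
            split_ifs <;> rfl
          rw [this]
          split_ifs
          · exact M_odd (by decide)
          · exact M_odd odd_one

lemma inner_red (A : Matrix (Fin d) (Fin d) ℝ) (m : ℝ) (i j : Fin d) (hij : j ≠ i) :
    ∑ k, ∑ l ∈ Finset.univ.filter (fun l => l ≠ k),
      A i j * A k l * (if (k = i ∧ l = j) ∨ (k = j ∧ l = i) then m else 0)
    = A i j * (A i j + A j i) * m := by
  have hsplit : ∀ k l,
      A i j * A k l * (if (k = i ∧ l = j) ∨ (k = j ∧ l = i) then m else 0)
      = (if k = i then (if l = j then A i j * A k l * m else 0) else 0)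
        + (if k = j then (if l = i then A i j * A k l * m else 0) else 0) := by
    intro k l
    by_cases h1 : k = i ∧ l = j
    · rw [if_pos (Or.inl h1), if_pos h1.1, if_pos h1.2,
        if_neg (fun hk : k = j => hij (h1.1.symm.trans hk).symm)]
      ring
    · by_cases h2 : k = j ∧ l = i
      · rw [if_pos (Or.inr h2), if_pos h2.1, if_pos h2.2,
          if_neg (fun hk : k = i => hij (hk.symm.trans h2.1).symm)]
        ring
      · rw [if_neg (by tauto)]
        have t1 : (if k = i then (if l = j then A i j * A k l * m else 0) else 0) = 0 := by
          split_ifs with ha hb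
          · exact absurd ⟨ha, hb⟩ h1
          · rfl
          · rfl
        have t2 : (if k = j then (if l = i then A i j * A k l * m else 0) else 0) = 0 := by
          split_ifs with ha hb
          · exact absurd ⟨ha, hb⟩ h2
          · rfl
          · rfl
        rw [t1, t2]
        ring
  rw [Finset.sum_congr rfl (fun k _ => Finset.sum_congr rfl (fun l _ => hsplit k l))]
  simp only [Finset.sum_add_distrib, Finset.sum_ite_irrel, Finset.sum_const_zero,
    Finset.sum_ite_eq', Finset.sum_ite_eq, Finset.mem_univ, if_true, Finset.mem_filter,
    true_and]
  rw [if_pos hij, if_pos (Ne.symm hij)]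
  ring

lemma tri_split (f : Fin d → Fin d → ℝ) (i : Fin d) :
    ∑ j ∈ Finset.univ.filter (fun j => j ≠ i), f i j
      = ∑ j ∈ Finset.univ.filter (fun j => j < i), f i j
        + ∑ j ∈ Finset.univ.filter (fun j => i < j), f i j := by
  rw [Finset.sum_filter, Finset.sum_filter, Finset.sum_filter, ← Finset.sum_add_distrib]
  apply Finset.sum_congr rfl
  intro j _
  rcases lt_trichotomy j i with h | h | h
  · simp [h, h.ne, h.not_gt, h.ne']
  · simp [h]
  · simp [h, h.ne', h.not_gt, h.ne]

lemma swap_gt (f : Fin d → Fin d → ℝ) :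
    ∑ i, ∑ j ∈ Finset.univ.filter (fun j => i < j), f i j
      = ∑ i, ∑ j ∈ Finset.univ.filter (fun j => j < i), f j i := by
  simp only [Finset.sum_filter]
  exact Finset.sum_comm

lemma outer_alg (A : Matrix (Fin d) (Fin d) ℝ) (p : Fin d) :
    ∑ i, ∑ j ∈ Finset.univ.filter (fun j => j ≠ i),
      A i j * (A i j + A j i) * (if p = i ∨ p = j then (3:ℝ) else 1)
    = (∑ i, ∑ j ∈ Finset.univ.filter (fun j => j < i), (A i j + A j i) ^ 2)
        + 2 * (∑ i ∈ Finset.univ.filter (fun i => p < i), (A i p + A p i) ^ 2)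
        + 2 * (∑ j ∈ Finset.univ.filter (fun j => j < p), (A p j + A j p) ^ 2) := by
  have hdec : ∀ i j : Fin d, j ≠ i →
      A i j * (A i j + A j i) * (if p = i ∨ p = j then (3:ℝ) else 1)
      = A i j * (A i j + A j i)
        + ((if p = i then 2 * (A i j * (A i j + A j i)) else 0)
          + (if p = j then 2 * (A i j * (A i j + A j i)) else 0)) := by
    intro i j hij
    by_cases h1 : p = i
    · rw [if_pos (Or.inl h1), if_pos h1, if_neg (fun h2 : p = j => hij (h2.symm.trans h1))]
      ring
    · by_cases h2 : p = j
      · rw [if_pos (Or.inr h2), if_neg h1, if_pos h2]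
        ring
      · rw [if_neg (by tauto), if_neg h1, if_neg h2]
        ring
  rw [Finset.sum_congr rfl (fun i _ => Finset.sum_congr rfl (fun j hj =>
    hdec i j (by simpa using hj)))]
  simp only [Finset.sum_add_distrib]
  have hS1 : (∑ i, ∑ j ∈ Finset.univ.filter (fun j => j ≠ i), A i j * (A i j + A j i))
      = ∑ i, ∑ j ∈ Finset.univ.filter (fun j => j < i), (A i j + A j i) ^ 2 := by
    rw [Finset.sum_congr rfl (fun i _ => tri_split (fun i j => A i j * (A i j + A j i)) i)]
    rw [Finset.sum_add_distrib, swap_gt (fun i j => A i j * (A i j + A j i)),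
      ← Finset.sum_add_distrib]
    apply Finset.sum_congr rfl
    intro i _
    rw [← Finset.sum_add_distrib]
    apply Finset.sum_congr rfl
    intro j _
    ring
  have hS2 : (∑ i, ∑ j ∈ Finset.univ.filter (fun j => j ≠ i),
        (if p = i then 2 * (A i j * (A i j + A j i)) else 0))
      + (∑ i, ∑ j ∈ Finset.univ.filter (fun j => j ≠ i),
        (if p = j then 2 * (A i j * (A i j + A j i)) else 0))
      = 2 * (∑ i ∈ Finset.univ.filter (fun i => p < i), (A i p + A p i) ^ 2)
        + 2 * (∑ j ∈ Finset.univ.filter (fun j => j < p), (A p j + A j p) ^ 2) := by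
    have ha : ∑ i, ∑ j ∈ Finset.univ.filter (fun j => j ≠ i),
        (if p = i then 2 * (A i j * (A i j + A j i)) else 0)
        = ∑ j ∈ Finset.univ.filter (fun j => j ≠ p), 2 * (A p j * (A p j + A j p)) := by
      simp only [Finset.sum_ite_irrel, Finset.sum_const_zero, Finset.sum_ite_eq,
        Finset.mem_univ, if_true]
    have hb : ∑ i, ∑ j ∈ Finset.univ.filter (fun j => j ≠ i),
        (if p = j then 2 * (A i j * (A i j + A j i)) else 0)
        = ∑ i ∈ Finset.univ.filter (fun i => i ≠ p), 2 * (A i p * (A i p + A p i)) := by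
      rw [Finset.sum_congr rfl (fun i _ => Finset.sum_ite_eq (Finset.univ.filter
        (fun j => j ≠ i)) p (fun j => 2 * (A i j * (A i j + A j i))))]
      rw [Finset.sum_filter]
      apply Finset.sum_congr rfl
      intro i _
      simp only [Finset.mem_filter, Finset.mem_univ, true_and]
      by_cases h : p = i
      · simp [h]
      · simp [h, Ne.symm h]
    rw [ha, hb]
    rw [tri_split (fun _ j => 2 * (A p j * (A p j + A j p))) p,
      tri_split (fun _ i => 2 * (A i p * (A i p + A p i))) p]
    rw [Finset.mul_sum, Finset.mul_sum]
    have e1 : ∑ j ∈ Finset.univ.filter (fun j => p < j), 2 * (A p j * (A p j + A j p))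
        + ∑ i ∈ Finset.univ.filter (fun i => p < i), 2 * (A i p * (A i p + A p i))
        = ∑ i ∈ Finset.univ.filter (fun i => p < i), 2 * (A i p + A p i) ^ 2 := by
      rw [← Finset.sum_add_distrib]
      apply Finset.sum_congr rfl
      intro i _
      ring
    have e2 : ∑ j ∈ Finset.univ.filter (fun j => j < p), 2 * (A p j * (A p j + A j p))
        + ∑ i ∈ Finset.univ.filter (fun i => i < p), 2 * (A i p * (A i p + A p i))
        = ∑ j ∈ Finset.univ.filter (fun j => j < p), 2 * (A p j + A j p) ^ 2 := by
      rw [← Finset.sum_add_distrib]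
      apply Finset.sum_congr rfl
      intro j _
      ring
    linarith [e1, e2]
  rw [hS1, hS2]
  ring


lemma expand (A : Matrix (Fin d) (Fin d) ℝ) (p : Fin d) (u : Fin d → ℝ) :
    (∑ i, ∑ j ∈ Finset.univ.filter (fun j => j ≠ i), A i j * u i * u j * u p) ^ 2
      = ∑ i, ∑ j ∈ Finset.univ.filter (fun j => j ≠ i), ∑ k,
          ∑ l ∈ Finset.univ.filter (fun l => l ≠ k),
            (A i j * A k l) * ∏ c, u c ^ e i j k l p c := by
  have h1 : ∀ i k : Fin d,
      (∑ j ∈ Finset.univ.filter (fun j => j ≠ i), A i j * u i * u j * u p)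
        * (∑ l ∈ Finset.univ.filter (fun l => l ≠ k), A k l * u k * u l * u p)
      = ∑ j ∈ Finset.univ.filter (fun j => j ≠ i),
          ∑ l ∈ Finset.univ.filter (fun l => l ≠ k),
            (A i j * A k l) * ∏ c, u c ^ e i j k l p c := by
    intro i k
    rw [Finset.sum_mul_sum]
    apply Finset.sum_congr rfl
    intro j _
    apply Finset.sum_congr rfl
    intro l _
    rw [← monomial_eq]
    ring
  rw [sq, Finset.sum_mul_sum]
  rw [Finset.sum_congr rfl (fun i _ => Finset.sum_congr rfl (fun k _ => h1 i k))]
  apply Finset.sum_congr rfl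
  intro i _
  exact Finset.sum_comm

end OffdiagAux

open OffdiagAux

theorem offdiag_second_moment_up {d : ℕ} (hd : 1 ≤ d)
    (A : Matrix (Fin d) (Fin d) ℝ) (p : Fin d) :
    ∫ u, (∑ i, ∑ j ∈ Finset.univ.filter (fun j => j ≠ i),
        A i j * u i * u j * u p) ^ 2 ∂(stdGaussianVec d)
      = (∑ i, ∑ j ∈ Finset.univ.filter (fun j => j < i), (A i j + A j i) ^ 2)
        + 2 * (∑ i ∈ Finset.univ.filter (fun i => p < i), (A i p + A p i) ^ 2)
        + 2 * (∑ j ∈ Finset.univ.filter (fun j => j < p), (A p j + A j p) ^ 2) := by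
  have hInt : ∀ i j k l : Fin d,
      Integrable (fun u : Fin d → ℝ => (A i j * A k l) * ∏ c, u c ^ e i j k l p c)
        (stdGaussianVec d) := fun i j k l => (integrable_monomial _).const_mul _
  calc ∫ u, (∑ i, ∑ j ∈ Finset.univ.filter (fun j => j ≠ i),
        A i j * u i * u j * u p) ^ 2 ∂(stdGaussianVec d)
      = ∫ u, ∑ i, ∑ j ∈ Finset.univ.filter (fun j => j ≠ i), ∑ k,
          ∑ l ∈ Finset.univ.filter (fun l => l ≠ k),
            (A i j * A k l) * ∏ c, u c ^ e i j k l p c ∂(stdGaussianVec d) := by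
        congr 1
        exact funext (expand A p)
    _ = ∑ i, ∑ j ∈ Finset.univ.filter (fun j => j ≠ i), ∑ k,
          ∑ l ∈ Finset.univ.filter (fun l => l ≠ k),
            ∫ u, (A i j * A k l) * ∏ c, u c ^ e i j k l p c ∂(stdGaussianVec d) := by
        rw [integral_finset_sum _ (fun i _ => integrable_finset_sum _
          (fun j _ => integrable_finset_sum _ (fun k _ => integrable_finset_sum _
            (fun l _ => hInt i j k l))))]
        apply Finset.sum_congr rfl
        intro i _
        rw [integral_finset_sum _ (fun j _ => integrable_finset_sum _
          (fun k _ => integrable_finset_sum _ (fun l _ => hInt i j k l)))]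
        apply Finset.sum_congr rfl
        intro j _
        rw [integral_finset_sum _ (fun k _ => integrable_finset_sum _
          (fun l _ => hInt i j k l))]
        apply Finset.sum_congr rfl
        intro k _
        rw [integral_finset_sum _ (fun l _ => hInt i j k l)]
    _ = ∑ i, ∑ j ∈ Finset.univ.filter (fun j => j ≠ i), ∑ k,
          ∑ l ∈ Finset.univ.filter (fun l => l ≠ k),
            A i j * A k l * (if (k = i ∧ l = j) ∨ (k = j ∧ l = i) then
              (if p = i ∨ p = j then (3:ℝ) else 1) else 0) := by
        apply Finset.sum_congr rfl
        intro i _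
        apply Finset.sum_congr rfl
        intro j hj
        apply Finset.sum_congr rfl
        intro k _
        apply Finset.sum_congr rfl
        intro l hl
        rw [MeasureTheory.integral_const_mul, integral_monomial,
          prod_M_eval p i j k l (by simpa using hj) (by simpa using hl)]
    _ = ∑ i, ∑ j ∈ Finset.univ.filter (fun j => j ≠ i),
          A i j * (A i j + A j i) * (if p = i ∨ p = j then (3:ℝ) else 1) := by
        apply Finset.sum_congr rfl
        intro i _
        apply Finset.sum_congr rfl
        intro j hj
        exact inner_red A _ i j (by simpa using hj)
    _ = _ := outer_alg A p
end

section
/- For every index p ∈ {1,…,d}, the off-diagonal part with extra factor u_p² satisfies E[ (Σ_{i≠j} A_{i,j} u_i u_j u_p²)² ] = 3·Σ_{i>j} (A_{i,j} + A_{j,i})² + 12·Σ_{i : i>p} (A_{i,p} + A_{p,i})² + 12·Σ_{j : j<p} (A_{p,j} + A_{j,p})², where Σ_{i≠j} ranges over ordered pairs (i,j) with i ≠ j and Σ_{i>j} over pairs with 1 ≤ j < i ≤ d. -/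
open MeasureTheory ProbabilityTheory Finset

open Real Nat

noncomputable def Ig (n : ℕ) : ℝ := ∫ x : ℝ, x ^ n * Real.exp (-x^2/2)

lemma pow_le_exp_aux (t : ℝ) (ht : 0 ≤ t) (n : ℕ) : t ^ n ≤ (n ! : ℝ) * Real.exp t := by
  have h := Real.sum_le_exp_of_nonneg ht (n+1)
  have h2 : t ^ n / n ! ≤ ∑ i ∈ Finset.range (n+1), t^i / i ! :=
    Finset.single_le_sum (f := fun i => t^i / (i ! : ℝ)) (fun i _ => div_nonneg (pow_nonneg ht i) (by positivity))
      (Finset.self_mem_range_succ n)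
  have h3 : (0:ℝ) < n ! := by positivity
  rw [div_le_iff₀ h3] at h2
  calc t ^ n ≤ (∑ i ∈ Finset.range (n+1), t^i / i !) * n ! := h2
    _ ≤ Real.exp t * n ! := by gcongr
    _ = (n ! : ℝ) * Real.exp t := by ring

lemma abs_pow_mul_exp_le (n : ℕ) (x : ℝ) :
    |x| ^ n * Real.exp (-x^2/2) ≤ Real.exp (-x^2/2) + (4:ℝ)^n * (n ! : ℝ) * Real.exp (-x^2/4) := by
  have he : (0:ℝ) < Real.exp (-x^2/2) := Real.exp_pos _
  have habs : |x| ^ n ≤ 1 + (x^2)^n := by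
    rcases le_total |x| 1 with h | h
    · have := pow_le_one₀ (abs_nonneg x) h (n := n)
      nlinarith [pow_nonneg (sq_nonneg x) n]
    · have h1 : |x| ^ n ≤ |x| ^ (2*n) :=
        pow_le_pow_right₀ h (by omega)
      have h2 : |x| ^ (2*n) = (x^2)^n := by
        rw [pow_mul, sq_abs]
      nlinarith [pow_nonneg (abs_nonneg x) n]
  have hx2 : (x^2)^n * Real.exp (-x^2/2) ≤ (4:ℝ)^n * (n ! : ℝ) * Real.exp (-x^2/4) := by
    have h1 : (x^2/4)^n ≤ (n ! : ℝ) * Real.exp (x^2/4) := pow_le_exp_aux _ (by positivity) n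
    have h2 : (x^2)^n = 4^n * (x^2/4)^n := by rw [← mul_pow]; ring_nf
    rw [h2]
    calc (4:ℝ)^n * (x^2/4)^n * Real.exp (-x^2/2)
        ≤ (4:ℝ)^n * ((n ! : ℝ) * Real.exp (x^2/4)) * Real.exp (-x^2/2) := by
          have h4 : (0:ℝ) ≤ (4:ℝ)^n := by positivity
          exact mul_le_mul_of_nonneg_right
            (mul_le_mul_of_nonneg_left h1 h4) (le_of_lt (Real.exp_pos _))
      _ = (4:ℝ)^n * (n ! : ℝ) * (Real.exp (x^2/4) * Real.exp (-x^2/2)) := by ring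
      _ = (4:ℝ)^n * (n ! : ℝ) * Real.exp (-x^2/4) := by rw [← Real.exp_add]; ring_nf
  nlinarith [pow_nonneg (sq_nonneg x) n]

lemma integrable_Ig (n : ℕ) : Integrable (fun x : ℝ => x ^ n * Real.exp (-x^2/2)) := by
  have h2 : Integrable (fun x : ℝ => Real.exp (-x^2/2)) := by
    have := integrable_exp_neg_mul_sq (show (0:ℝ) < 1/2 by norm_num)
    refine this.congr ?_
    filter_upwards with x
    ring_nf
  have h4 : Integrable (fun x : ℝ => Real.exp (-x^2/4)) := by
    have := integrable_exp_neg_mul_sq (show (0:ℝ) < 1/4 by norm_num)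
    refine this.congr ?_
    filter_upwards with x
    ring_nf
  refine Integrable.mono' (h2.add (h4.const_mul ((4:ℝ)^n * (n ! : ℝ)))) ?_ ?_
  · exact (Continuous.mul (continuous_pow n)
      (Real.continuous_exp.comp (by continuity))).aestronglyMeasurable
  · filter_upwards with x
    have : ‖x ^ n * Real.exp (-x^2/2)‖ = |x| ^ n * Real.exp (-x^2/2) := by
      rw [norm_mul, norm_pow, Real.norm_eq_abs, Real.norm_eq_abs,
        abs_of_pos (Real.exp_pos _)]
    rw [this]
    exact abs_pow_mul_exp_le n x

lemma Ig_zero : Ig 0 = Real.sqrt (2*Real.pi) := by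
  have h := integral_gaussian (1/2)
  have : Ig 0 = ∫ x : ℝ, Real.exp (-(1/2) * x^2) := by
    unfold Ig
    congr 1
    funext x
    ring_nf
  rw [this, h]
  rw [show Real.pi / (1/2) = 2 * Real.pi by ring]

lemma Ig_odd (n : ℕ) (hn : Odd n) : Ig n = 0 := by
  have m : MeasurableEmbedding fun x : ℝ => -x :=
    (Homeomorph.neg ℝ).measurableEmbedding
  have h0 := m.integral_map (μ := (volume : Measure ℝ))
    (g := fun y : ℝ => y ^ n * Real.exp (-y^2/2))
  rw [Measure.map_neg_eq_self (volume : Measure ℝ)] at h0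
  have hfe : ∀ x : ℝ, (-x) ^ n * Real.exp (-(-x)^2/2)
      = -(x ^ n * Real.exp (-x^2/2)) := by
    intro x; rw [hn.neg_pow]; ring_nf
  have h1 : Ig n = -Ig n := by
    unfold Ig
    conv_lhs => rw [h0]
    simp only [hfe]
    rw [integral_neg]
  linarith

lemma Ig_rec (n : ℕ) : Ig (n+2) = ((n:ℝ)+1) * Ig n := by
  have hu : ∀ x : ℝ, HasDerivAt (fun y : ℝ => y^(n+1)) (((n:ℝ)+1) * x^n) x := by
    intro x
    have h := hasDerivAt_pow (n+1) x
    refine h.congr_deriv ?_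
    push_cast
    ring_nf
  have hv : ∀ x : ℝ, HasDerivAt (fun y : ℝ => -Real.exp (-y^2/2))
      (x * Real.exp (-x^2/2)) x := by
    intro x
    have h1 : HasDerivAt (fun y : ℝ => -y^2/2) (-x) x := by
      have h := ((hasDerivAt_pow 2 x).neg).div_const 2
      refine h.congr_deriv ?_
      norm_num
      ring
    have h3 := (h1.exp).neg
    refine h3.congr_deriv ?_
    ring
  have hint1 : Integrable ((fun y : ℝ => y^(n+1)) * (fun x : ℝ => x * Real.exp (-x^2/2))) := by
    refine (integrable_Ig (n+2)).congr ?_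
    filter_upwards with x
    simp only [Pi.mul_apply]
    ring
  have hint2 : Integrable ((fun x : ℝ => ((n:ℝ)+1) * x^n) * (fun y : ℝ => -Real.exp (-y^2/2))) := by
    refine (((integrable_Ig n).const_mul (((n:ℝ)+1))).neg).congr ?_
    filter_upwards with x
    simp only [Pi.mul_apply, Pi.neg_apply]
    ring
  have hint3 : Integrable ((fun y : ℝ => y^(n+1)) * (fun y : ℝ => -Real.exp (-y^2/2))) := by
    refine ((integrable_Ig (n+1)).neg).congr ?_
    filter_upwards with x
    simp only [Pi.mul_apply, Pi.neg_apply]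
    ring
  have key := integral_mul_deriv_eq_deriv_mul_of_integrable (fun x _ => hu x) (fun x _ => hv x) hint1 hint2 hint3
  have e1 : Ig (n+2) = ∫ x : ℝ, x^(n+1) * (x * Real.exp (-x^2/2)) := by
    unfold Ig; congr 1; funext x; ring
  have e2 : -∫ x : ℝ, ((n:ℝ)+1)*x^n * (-Real.exp (-x^2/2)) = ((n:ℝ)+1) * Ig n := by
    unfold Ig
    rw [← integral_neg, ← integral_const_mul]
    congr 1; funext x; ring
  rw [e1, key]
  exact e2

lemma Ig_two : Ig 2 = Real.sqrt (2*Real.pi) := by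
  have := Ig_rec 0
  rw [Ig_zero] at this
  simpa using this

lemma Ig_four : Ig 4 = 3 * Real.sqrt (2*Real.pi) := by
  have := Ig_rec 2
  rw [Ig_two] at this
  rw [this]
  push_cast
  ring

lemma Ig_six : Ig 6 = 15 * Real.sqrt (2*Real.pi) := by
  have := Ig_rec 4
  rw [Ig_four] at this
  rw [this]
  push_cast
  ring

noncomputable def Gm (n : ℕ) : ℝ := ∫ x, x ^ n ∂(gaussianReal 0 1)

lemma gaussianReal_std_eq :
    gaussianReal 0 1 = (volume : Measure ℝ).withDensity
      (fun x => ((gaussianPDFReal 0 1 x).toNNReal : ENNReal)) := by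
  rw [gaussianReal_of_var_ne_zero _ one_ne_zero]
  rfl

lemma integral_gaussianReal_eq_s19 (f : ℝ → ℝ) :
    ∫ x, f x ∂(gaussianReal 0 1) = ∫ x, gaussianPDFReal 0 1 x * f x := by
  rw [gaussianReal_std_eq,
    integral_withDensity_eq_integral_smul
      ((measurable_gaussianPDFReal 0 1).real_toNNReal) f]
  congr 1
  funext x
  rw [NNReal.smul_def, Real.coe_toNNReal _ (gaussianPDFReal_nonneg 0 1 x)]
  rfl

lemma integrable_gaussianReal_iff (f : ℝ → ℝ) :
    Integrable f (gaussianReal 0 1)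
      ↔ Integrable (fun x => gaussianPDFReal 0 1 x * f x) := by
  rw [gaussianReal_std_eq,
    integrable_withDensity_iff_integrable_smul
      ((measurable_gaussianPDFReal 0 1).real_toNNReal)]
  constructor <;> intro h <;> refine h.congr ?_ <;> filter_upwards with x
  · rw [NNReal.smul_def, Real.coe_toNNReal _ (gaussianPDFReal_nonneg 0 1 x)]; rfl
  · rw [NNReal.smul_def, Real.coe_toNNReal _ (gaussianPDFReal_nonneg 0 1 x)]; rfl

lemma gaussianPDFReal_std (x : ℝ) :
    gaussianPDFReal 0 1 x = (Real.sqrt (2 * Real.pi))⁻¹ * Real.exp (-x^2/2) := by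
  unfold gaussianPDFReal
  norm_num

lemma integrable_pow_gaussianReal (n : ℕ) :
    Integrable (fun x => x ^ n) (gaussianReal 0 1) := by
  rw [integrable_gaussianReal_iff]
  refine ((integrable_Ig n).const_mul ((Real.sqrt (2 * Real.pi))⁻¹)).congr ?_
  filter_upwards with x
  rw [gaussianPDFReal_std]
  ring

lemma sqrt_two_pi_pos : 0 < Real.sqrt (2 * Real.pi) :=
  Real.sqrt_pos.mpr (by positivity)

lemma Gm_eq (n : ℕ) : Gm n = (Real.sqrt (2 * Real.pi))⁻¹ * Ig n := by
  unfold Gm Ig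
  rw [integral_gaussianReal_eq_s19, ← integral_const_mul]
  congr 1
  funext x
  rw [gaussianPDFReal_std]
  ring

lemma Gm_zero : Gm 0 = 1 := by
  rw [Gm_eq, Ig_zero, inv_mul_cancel₀ (ne_of_gt sqrt_two_pi_pos)]

lemma Gm_two : Gm 2 = 1 := by
  rw [Gm_eq, Ig_two, inv_mul_cancel₀ (ne_of_gt sqrt_two_pi_pos)]

lemma Gm_four : Gm 4 = 3 := by
  rw [Gm_eq, Ig_four, ← mul_assoc, mul_comm _ (3:ℝ), mul_assoc,
    inv_mul_cancel₀ (ne_of_gt sqrt_two_pi_pos)]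
  ring

lemma Gm_six : Gm 6 = 15 := by
  rw [Gm_eq, Ig_six, ← mul_assoc, mul_comm _ (15:ℝ), mul_assoc,
    inv_mul_cancel₀ (ne_of_gt sqrt_two_pi_pos)]
  ring

lemma Gm_odd (n : ℕ) (hn : Odd n) : Gm n = 0 := by
  rw [Gm_eq, Ig_odd n hn, mul_zero]


noncomputable def gaussSpace : MeasureSpace ℝ := ⟨gaussianReal 0 1⟩

lemma integral_pi_gauss {d : ℕ} (f : Fin d → ℝ → ℝ) :
    ∫ u, ∏ i, f i (u i) ∂(stdGaussianVec d) = ∏ i, ∫ x, f i x ∂(gaussianReal 0 1) := by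
  letI := gaussSpace
  haveI : SigmaFinite (volume : Measure ℝ) := by
    show SigmaFinite (gaussianReal 0 1)
    infer_instance
  exact MeasureTheory.integral_fintype_prod_eq_prod f

lemma integrable_pi_gauss {d : ℕ} (f : Fin d → ℝ → ℝ)
    (hf : ∀ i, Integrable (f i) (gaussianReal 0 1)) :
    Integrable (fun u => ∏ i, f i (u i)) (stdGaussianVec d) := by
  letI := gaussSpace
  haveI : SigmaFinite (volume : Measure ℝ) := by
    show SigmaFinite (gaussianReal 0 1)
    infer_instance
  exact MeasureTheory.Integrable.fintype_prod hf

lemma prod_Gm_core {d : ℕ} (i j p : Fin d) (hij : i ≠ j) :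
    (∏ c : Fin d, Gm ((if c = i then 2 else 0) + (if c = j then 2 else 0)
      + (if c = p then 4 else 0)))
    = if p = i ∨ p = j then 15 else 3 := by
  by_cases hpi : p = i
  · subst hpi
    rw [if_pos (Or.inl rfl)]
    have h1 : ∀ c : Fin d, ((if c = p then 2 else 0) + (if c = j then 2 else 0)
        + (if c = p then 4 else 0)) = if c = p then 6 else if c = j then 2 else 0 := by
      intro c
      by_cases h1 : c = p <;> by_cases h2 : c = j <;> simp_all
    rw [Finset.prod_congr rfl (fun c _ => congrArg Gm (h1 c))]
    rw [← Finset.prod_subset (Finset.subset_univ ({p, j} : Finset (Fin d)))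
      (fun x _ hx => ?_)]
    · rw [Finset.prod_pair hij]
      rw [if_pos rfl, if_neg (Ne.symm hij), if_pos rfl, Gm_six, Gm_two]
      norm_num
    · simp only [Finset.mem_insert, Finset.mem_singleton, not_or] at hx
      rw [if_neg hx.1, if_neg hx.2]
      exact Gm_zero
  · by_cases hpj : p = j
    · subst hpj
      rw [if_pos (Or.inr rfl)]
      have h1 : ∀ c : Fin d, ((if c = i then 2 else 0) + (if c = p then 2 else 0)
          + (if c = p then 4 else 0)) = if c = i then 2 else if c = p then 6 else 0 := by
        intro c
        by_cases h1 : c = i <;> by_cases h2 : c = p <;> simp_all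
      rw [Finset.prod_congr rfl (fun c _ => congrArg Gm (h1 c))]
      rw [← Finset.prod_subset (Finset.subset_univ ({i, p} : Finset (Fin d)))
        (fun x _ hx => ?_)]
      · rw [Finset.prod_pair hij]
        rw [if_pos rfl, if_neg (Ne.symm hij), if_pos rfl, Gm_six, Gm_two]
        norm_num
      · simp only [Finset.mem_insert, Finset.mem_singleton, not_or] at hx
        rw [if_neg hx.1, if_neg hx.2]
        exact Gm_zero
    · rw [if_neg (by tauto)]
      have h1 : ∀ c : Fin d, ((if c = i then 2 else 0) + (if c = j then 2 else 0)
          + (if c = p then 4 else 0))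
          = if c = i then 2 else if c = j then 2 else if c = p then 4 else 0 := by
        intro c
        by_cases h1 : c = i <;> by_cases h2 : c = j <;> by_cases h3 : c = p <;> simp_all
      rw [Finset.prod_congr rfl (fun c _ => congrArg Gm (h1 c))]
      rw [← Finset.prod_subset (Finset.subset_univ ({i, j, p} : Finset (Fin d)))
        (fun x _ hx => ?_)]
      · have hip : i ∉ ({j, p} : Finset (Fin d)) := by
          simp only [Finset.mem_insert, Finset.mem_singleton]
          push_neg
          exact ⟨hij, fun h => hpi h.symm⟩
        have hjp : j ∉ ({p} : Finset (Fin d)) := by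
          simp only [Finset.mem_singleton]
          exact fun h => hpj h.symm
        rw [Finset.prod_insert hip, Finset.prod_insert hjp, Finset.prod_singleton]
        rw [if_pos rfl, if_neg (Ne.symm hij), if_pos rfl, if_neg hpi, if_neg hpj,
          if_pos rfl, Gm_two, Gm_four]
        norm_num
      · simp only [Finset.mem_insert, Finset.mem_singleton, not_or] at hx
        rw [if_neg hx.1, if_neg hx.2.1, if_neg hx.2.2]
        exact Gm_zero

lemma Gm_one_add (b : Prop) [Decidable b] : Gm (1 + if b then 4 else 0) = 0 := by
  by_cases h : b
  · rw [if_pos h]; exact Gm_odd 5 (by decide)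
  · rw [if_neg h]; exact Gm_odd 1 (by decide)

lemma prod_Gm {d : ℕ} (i j k l p : Fin d) (hij : j ≠ i) (hkl : l ≠ k) :
    (∏ c : Fin d, Gm ((if c = i then 1 else 0) + (if c = j then 1 else 0)
      + (if c = k then 1 else 0) + (if c = l then 1 else 0) + (if c = p then 4 else 0)))
    = if (k = i ∧ l = j) ∨ (k = j ∧ l = i) then (if p = i ∨ p = j then 15 else 3)
      else 0 := by
  by_cases hki : k = i
  · by_cases hlj : l = j
    · rw [if_pos (Or.inl ⟨hki, hlj⟩)]
      rw [← prod_Gm_core i j p (Ne.symm hij)]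
      refine Finset.prod_congr rfl (fun c _ => congrArg Gm ?_)
      by_cases h1 : c = i <;> by_cases h2 : c = j <;> simp_all
    · -- zero case : use coordinate l : e l = 1 + 4[l=p]
      rw [if_neg (by
        rintro (⟨h1, h2⟩ | ⟨h1, h2⟩)
        · exact hlj h2
        · exact hij (hki ▸ h1).symm)]
      refine Finset.prod_eq_zero (Finset.mem_univ l) ?_
      have hli : l ≠ i := hki ▸ hkl
      rw [if_neg hli, if_neg hlj, if_neg (hki ▸ hkl), if_pos rfl]
      simpa using Gm_one_add (l = p)
  · by_cases hkj : k = j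
    · by_cases hli : l = i
      · rw [if_pos (Or.inr ⟨hkj, hli⟩)]
        rw [← prod_Gm_core i j p (Ne.symm hij)]
        refine Finset.prod_congr rfl (fun c _ => congrArg Gm ?_)
        by_cases h1 : c = i <;> by_cases h2 : c = j <;> simp_all
      · -- zero via l : l ≠ i, l ≠ j (since l ≠ k = j), l ≠ k
        rw [if_neg (by
          rintro (⟨h1, h2⟩ | ⟨h1, h2⟩)
          · exact hki h1
          · exact hli h2)]
        refine Finset.prod_eq_zero (Finset.mem_univ l) ?_
        rw [if_neg hli, if_neg (hkj ▸ hkl), if_neg hkl, if_pos rfl]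
        simpa using Gm_one_add (l = p)
    · -- zero via k : k ≠ i, k ≠ j, k ≠ l
      rw [if_neg (by
        rintro (⟨h1, h2⟩ | ⟨h1, h2⟩)
        · exact hki h1
        · exact hkj h1)]
      refine Finset.prod_eq_zero (Finset.mem_univ k) ?_
      rw [if_neg hki, if_neg hkj, if_pos rfl, if_neg (Ne.symm hkl)]
      simpa using Gm_one_add (k = p)

def Ee {d : ℕ} (p : Fin d) (q r : Fin d × Fin d) (c : Fin d) : ℕ :=
  (if c = q.1 then 1 else 0) + (if c = q.2 then 1 else 0)
    + (if c = r.1 then 1 else 0) + (if c = r.2 then 1 else 0)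
    + (if c = p then 4 else 0)

lemma prod_pow_single {d : ℕ} (u : Fin d → ℝ) (i : Fin d) (m : ℕ) :
    (∏ c : Fin d, u c ^ (if c = i then m else 0)) = u i ^ m := by
  have h1 : ∀ c : Fin d, u c ^ (if c = i then m else 0)
      = if c = i then u c ^ m else 1 := by
    intro c; split <;> simp
  rw [Finset.prod_congr rfl fun c _ => h1 c, Finset.prod_ite_eq' Finset.univ i
    (fun c => u c ^ m)]
  simp

lemma mono_eq {d : ℕ} (A : Matrix (Fin d) (Fin d) ℝ) (p : Fin d) (u : Fin d → ℝ)
    (q r : Fin d × Fin d) :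
    (A q.1 q.2 * u q.1 * u q.2 * u p ^ 2) * (A r.1 r.2 * u r.1 * u r.2 * u p ^ 2)
      = (A q.1 q.2 * A r.1 r.2) * ∏ c, u c ^ Ee p q r c := by
  have : (∏ c, u c ^ Ee p q r c)
      = (∏ c : Fin d, u c ^ (if c = q.1 then 1 else 0))
        * (∏ c : Fin d, u c ^ (if c = q.2 then 1 else 0))
        * (∏ c : Fin d, u c ^ (if c = r.1 then 1 else 0))
        * (∏ c : Fin d, u c ^ (if c = r.2 then 1 else 0))
        * (∏ c : Fin d, u c ^ (if c = p then 4 else 0)) := by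
    rw [← Finset.prod_mul_distrib, ← Finset.prod_mul_distrib,
      ← Finset.prod_mul_distrib, ← Finset.prod_mul_distrib]
    refine Finset.prod_congr rfl fun c _ => ?_
    unfold Ee
    rw [pow_add, pow_add, pow_add, pow_add]
  rw [this, prod_pow_single, prod_pow_single, prod_pow_single, prod_pow_single,
    prod_pow_single]
  ring

lemma integrable_mono {d : ℕ} (a : ℝ) (p : Fin d) (q r : Fin d × Fin d) :
    Integrable (fun u : Fin d → ℝ => a * ∏ c, u c ^ Ee p q r c)
      (stdGaussianVec d) :=
  (integrable_pi_gauss (fun c x => x ^ Ee p q r c)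
    (fun c => integrable_pow_gaussianReal _)).const_mul a

lemma integral_mono {d : ℕ} (a : ℝ) (p : Fin d) (q r : Fin d × Fin d) :
    ∫ u, a * ∏ c, u c ^ Ee p q r c ∂(stdGaussianVec d)
      = a * ∏ c, Gm (Ee p q r c) := by
  rw [integral_const_mul]
  congr 1
  exact integral_pi_gauss (fun c x => x ^ Ee p q r c)

theorem offdiag_second_moment_up_sq {d : ℕ} (hd : 1 ≤ d)
    (A : Matrix (Fin d) (Fin d) ℝ) (p : Fin d) :
    ∫ u, (∑ i, ∑ j ∈ Finset.univ.filter (fun j => j ≠ i),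
        A i j * u i * u j * (u p) ^ 2) ^ 2 ∂(stdGaussianVec d)
      = 3 * (∑ i, ∑ j ∈ Finset.univ.filter (fun j => j < i), (A i j + A j i) ^ 2)
        + 12 * (∑ i ∈ Finset.univ.filter (fun i => p < i), (A i p + A p i) ^ 2)
        + 12 * (∑ j ∈ Finset.univ.filter (fun j => j < p), (A p j + A j p) ^ 2) := by
  classical
  set S : Finset (Fin d × Fin d) := Finset.univ.filter (fun q => q.2 ≠ q.1) with hS
  have hconv : ∀ (f : Fin d → Fin d → ℝ),
      (∑ i, ∑ j ∈ Finset.univ.filter (fun j => j ≠ i), f i j) = ∑ q ∈ S, f q.1 q.2 := by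
    intro f
    rw [hS, Finset.sum_filter, Fintype.sum_prod_type]
    simp [Finset.sum_filter]
  have hA : ∀ u : Fin d → ℝ,
      (∑ i, ∑ j ∈ Finset.univ.filter (fun j => j ≠ i),
          A i j * u i * u j * (u p) ^ 2) ^ 2
        = ∑ q ∈ S, ∑ r ∈ S, (A q.1 q.2 * A r.1 r.2) * ∏ c, u c ^ Ee p q r c := by
    intro u
    rw [hconv (fun i j => A i j * u i * u j * u p ^ 2), sq, Finset.sum_mul_sum]
    exact Finset.sum_congr rfl fun q _ => Finset.sum_congr rfl fun r _ =>
      mono_eq A p u q r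
  have hInt : ∫ u, (∑ i, ∑ j ∈ Finset.univ.filter (fun j => j ≠ i),
        A i j * u i * u j * (u p) ^ 2) ^ 2 ∂(stdGaussianVec d)
      = ∑ q ∈ S, ∑ r ∈ S, (A q.1 q.2 * A r.1 r.2) * ∏ c, Gm (Ee p q r c) := by
    rw [show (fun u : Fin d → ℝ => (∑ i, ∑ j ∈ Finset.univ.filter (fun j => j ≠ i),
        A i j * u i * u j * (u p) ^ 2) ^ 2)
      = fun u : Fin d → ℝ => ∑ q ∈ S, ∑ r ∈ S,
          (A q.1 q.2 * A r.1 r.2) * ∏ c, u c ^ Ee p q r c from funext hA]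
    rw [integral_finset_sum S (fun q _ => integrable_finset_sum S
      (fun r _ => integrable_mono _ p q r))]
    refine Finset.sum_congr rfl fun q _ => ?_
    rw [integral_finset_sum S (fun r _ => integrable_mono _ p q r)]
    exact Finset.sum_congr rfl fun r _ => integral_mono _ p q r
  have hmom : ∀ q ∈ S, ∀ r ∈ S, (∏ c, Gm (Ee p q r c))
      = if (r.1 = q.1 ∧ r.2 = q.2) ∨ (r.1 = q.2 ∧ r.2 = q.1)
        then (if p = q.1 ∨ p = q.2 then (15:ℝ) else 3) else 0 := by
    intro q hq r hr
    simp only [hS, Finset.mem_filter, Finset.mem_univ, true_and] at hq hr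
    exact prod_Gm q.1 q.2 r.1 r.2 p hq hr
  have hinner : ∀ q ∈ S, (∑ r ∈ S, (A q.1 q.2 * A r.1 r.2) *
      (if (r.1 = q.1 ∧ r.2 = q.2) ∨ (r.1 = q.2 ∧ r.2 = q.1)
        then (if p = q.1 ∨ p = q.2 then (15:ℝ) else 3) else 0))
      = (A q.1 q.2 * A q.1 q.2 + A q.1 q.2 * A q.2 q.1)
          * (if p = q.1 ∨ p = q.2 then (15:ℝ) else 3) := by
    intro q hq0
    have hq : q.2 ≠ q.1 := by
      simpa [hS, Finset.mem_filter] using hq0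
    have hswapmem : Prod.swap q ∈ S := by
      simp [hS, Finset.mem_filter]
      exact Ne.symm hq
    have hsplit : ∀ r : Fin d × Fin d,
        (A q.1 q.2 * A r.1 r.2) *
          (if (r.1 = q.1 ∧ r.2 = q.2) ∨ (r.1 = q.2 ∧ r.2 = q.1)
            then (if p = q.1 ∨ p = q.2 then (15:ℝ) else 3) else 0)
        = (if r = q then A q.1 q.2 * A r.1 r.2
              * (if p = q.1 ∨ p = q.2 then (15:ℝ) else 3) else 0)
          + (if r = Prod.swap q then A q.1 q.2 * A r.1 r.2
              * (if p = q.1 ∨ p = q.2 then (15:ℝ) else 3) else 0) := by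
      intro r
      by_cases h1 : r = q
      · subst h1
        rw [if_pos (Or.inl ⟨rfl, rfl⟩), if_pos rfl,
          if_neg (fun h => hq (congrArg Prod.fst h).symm)]
        ring
      · by_cases h2 : r = Prod.swap q
        · subst h2
          rw [if_pos (Or.inr ⟨rfl, rfl⟩), if_neg (fun h => hq (congrArg Prod.fst h)),
            if_pos rfl]
          ring
        · rw [if_neg (by
            rintro (⟨ha, hb⟩ | ⟨ha, hb⟩)
            · exact h1 (Prod.ext ha hb)
            · exact h2 (Prod.ext ha hb)), if_neg h1, if_neg h2]
          ring
    rw [Finset.sum_congr rfl (fun r _ => hsplit r), Finset.sum_add_distrib,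
      Finset.sum_ite_eq' S q _, Finset.sum_ite_eq' S (Prod.swap q) _,
      if_pos hq0, if_pos hswapmem]
    simp only [Prod.fst_swap, Prod.snd_swap]
    ring
  have hmain : ∑ q ∈ S, ∑ r ∈ S, (A q.1 q.2 * A r.1 r.2) * ∏ c, Gm (Ee p q r c)
      = ∑ q ∈ S, (A q.1 q.2 * A q.1 q.2 + A q.1 q.2 * A q.2 q.1)
          * (if p = q.1 ∨ p = q.2 then (15:ℝ) else 3) := by
    refine Finset.sum_congr rfl fun q hq => ?_
    rw [← hinner q hq]
    exact Finset.sum_congr rfl fun r hr => by rw [hmom q hq r hr]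
  rw [hInt, hmain]
  set S₁ : Finset (Fin d × Fin d) := Finset.univ.filter (fun q => q.2 < q.1) with hS₁
  set S₂ : Finset (Fin d × Fin d) := Finset.univ.filter (fun q => q.1 < q.2) with hS₂
  have hconv2 : ∀ (f : Fin d → Fin d → ℝ),
      (∑ q ∈ S₁, f q.1 q.2)
        = ∑ i, ∑ j ∈ Finset.univ.filter (fun j => j < i), f i j := by
    intro f
    rw [hS₁, Finset.sum_filter, Fintype.sum_prod_type]
    simp [Finset.sum_filter]
  have hSeq : S = S₁ ∪ S₂ := by
    ext q
    simp only [hS, hS₁, hS₂, Finset.mem_filter, Finset.mem_univ, true_and,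
      Finset.mem_union]
    constructor
    · exact fun h => lt_or_gt_of_ne h
    · rintro (h | h)
      · exact _root_.ne_of_lt h
      · exact _root_.ne_of_gt h
  have hdisj : Disjoint S₁ S₂ := by
    rw [Finset.disjoint_left]
    intro q h1 h2
    simp only [hS₁, Finset.mem_filter, Finset.mem_univ, true_and] at h1
    simp only [hS₂, Finset.mem_filter, Finset.mem_univ, true_and] at h2
    exact absurd h2 (not_lt.mpr (le_of_lt h1))
  rw [hSeq, Finset.sum_union hdisj]
  have hswapsum : ∑ q ∈ S₂, (A q.1 q.2 * A q.1 q.2 + A q.1 q.2 * A q.2 q.1)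
        * (if p = q.1 ∨ p = q.2 then (15:ℝ) else 3)
      = ∑ q ∈ S₁, (A q.2 q.1 * A q.2 q.1 + A q.2 q.1 * A q.1 q.2)
        * (if p = q.1 ∨ p = q.2 then (15:ℝ) else 3) := by
    refine Finset.sum_nbij' Prod.swap Prod.swap ?_ ?_ ?_ ?_ ?_
    · intro a ha
      simp only [hS₂, Finset.mem_filter, Finset.mem_univ, true_and] at ha
      simp only [hS₁, Finset.mem_filter, Finset.mem_univ, true_and]
      simpa using ha
    · intro a ha
      simp only [hS₁, Finset.mem_filter, Finset.mem_univ, true_and] at ha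
      simp only [hS₂, Finset.mem_filter, Finset.mem_univ, true_and]
      simpa using ha
    · intro a _; simp
    · intro a _; simp
    · intro a _
      simp only [Prod.fst_swap, Prod.snd_swap]
      congr 1
      exact if_congr (or_comm) rfl rfl
  rw [hswapsum, ← Finset.sum_add_distrib]
  have hpoint : ∀ q : Fin d × Fin d,
      (A q.1 q.2 * A q.1 q.2 + A q.1 q.2 * A q.2 q.1)
          * (if p = q.1 ∨ p = q.2 then (15:ℝ) else 3)
        + (A q.2 q.1 * A q.2 q.1 + A q.2 q.1 * A q.1 q.2)
          * (if p = q.1 ∨ p = q.2 then (15:ℝ) else 3)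
      = (A q.1 q.2 + A q.2 q.1) ^ 2 * 3
        + (A q.1 q.2 + A q.2 q.1) ^ 2 * (if p = q.1 ∨ p = q.2 then (12:ℝ) else 0) := by
    intro q
    by_cases h : p = q.1 ∨ p = q.2
    · rw [if_pos h, if_pos h]; ring
    · rw [if_neg h, if_neg h]; ring
  rw [Finset.sum_congr rfl (fun q _ => hpoint q), Finset.sum_add_distrib]
  have hterm1 : ∑ q ∈ S₁, (A q.1 q.2 + A q.2 q.1) ^ 2 * 3
      = 3 * ∑ i, ∑ j ∈ Finset.univ.filter (fun j => j < i), (A i j + A j i) ^ 2 := by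
    rw [← hconv2 (fun i j => (A i j + A j i) ^ 2), ← Finset.sum_mul]
    ring
  have hsplit2 : ∀ i : Fin d, ∀ j ∈ Finset.univ.filter (fun j => j < i),
      (A i j + A j i) ^ 2 * (if p = i ∨ p = j then (12:ℝ) else 0)
      = (if p = i then (A i j + A j i) ^ 2 * 12 else 0)
        + (if p = j then (A i j + A j i) ^ 2 * 12 else 0) := by
    intro i j hj
    simp only [Finset.mem_filter, Finset.mem_univ, true_and] at hj
    have hij : ¬ i = j := by intro h; subst h; exact absurd hj (lt_irrefl _)
    have hji : ¬ j = i := fun h => hij h.symm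
    by_cases h1 : p = i <;> by_cases h2 : p = j
    · exfalso; subst h1; subst h2; exact absurd hj (lt_irrefl p)
    · simp [h1, h2, hij, hji]
    · simp [h1, h2, hij, hji]
    · simp [h1, h2, hij, hji]
  have hterm2 : ∑ q ∈ S₁, (A q.1 q.2 + A q.2 q.1) ^ 2
        * (if p = q.1 ∨ p = q.2 then (12:ℝ) else 0)
      = 12 * (∑ j ∈ Finset.univ.filter (fun j => j < p), (A p j + A j p) ^ 2)
        + 12 * (∑ i ∈ Finset.univ.filter (fun i => p < i), (A i p + A p i) ^ 2) := by
    rw [hconv2 (fun i j => (A i j + A j i) ^ 2 * (if p = i ∨ p = j then (12:ℝ) else 0))]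
    rw [Finset.sum_congr rfl (fun i _ => Finset.sum_congr rfl (fun j hj => hsplit2 i j hj))]
    rw [Finset.sum_congr rfl (fun i _ => Finset.sum_add_distrib), Finset.sum_add_distrib]
    congr 1
    · have h1 : ∀ i : Fin d, (∑ j ∈ Finset.univ.filter (fun j => j < i),
          (if p = i then (A i j + A j i) ^ 2 * 12 else 0))
          = if p = i then ∑ j ∈ Finset.univ.filter (fun j => j < i),
              (A i j + A j i) ^ 2 * 12 else 0 := by
        intro i
        rw [Finset.sum_ite_irrel]
        simp
      rw [Finset.sum_congr rfl (fun i _ => h1 i), Finset.sum_ite_eq Finset.univ p]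
      simp only [Finset.mem_univ, if_true]
      rw [← Finset.sum_mul]
      ring
    · have h2 : ∀ i : Fin d, (∑ j ∈ Finset.univ.filter (fun j => j < i),
          (if p = j then (A i j + A j i) ^ 2 * 12 else 0))
          = if p < i then (A i p + A p i) ^ 2 * 12 else 0 := by
        intro i
        rw [Finset.sum_ite_eq (Finset.univ.filter (fun j => j < i)) p]
        simp [Finset.mem_filter]
      rw [Finset.sum_congr rfl (fun i _ => h2 i), ← Finset.sum_filter, ← Finset.sum_mul]
      ring
  rw [hterm1, hterm2]
  ring
end
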